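/- arXiv:math-ph/0603061 — 4 statements merged into one kernel-verified Lean document; each statement's English description precedes it below -/
import Mathlib

section
/- Suppose λ : ℝ^ν → ℂ satisfies |λ(k)| ≤ 1 for all k and the decay bound |λ(k)| ≤ 𝔠/(1 + ‖k‖^{max(ν, ν/2+1)+δ}) for some 𝔠 < ∞ and δ > 0. Then there exists M < ∞ such that for every L ≥ 1, writing Λ* := (2π/L)ℤ^ν and V := L^ν: (i) Σ_{k∈Λ*} |λ(k)| ≤ M·V; (ii) Σ_{k∈Λ*} ε(k)|λ(k)|² ≤ M·V; and (iii) sup_{k∈ℝ^ν} ε(k)|λ(k)|² ≤ M. -/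
open MeasureTheory Real Filter Topology

noncomputable section

namespace PB

abbrev Kspace (ν : ℕ) : Type := EuclideanSpace ℝ (Fin ν)

/-- kinetic energy `ε(k) = ‖k‖²/(2m)` -/
def eps (ν : ℕ) (m : ℝ) (k : Kspace ν) : ℝ := ‖k‖ ^ 2 / (2 * m)

/-- `f(k,ρ) = ε(k) − μ + vρ` -/
def fF (ν : ℕ) (m μ v : ℝ) (k : Kspace ν) (ρ : ℝ) : ℝ := eps ν m k - μ + v * ρ

/-- `E(k,q,ρ) = (f(k,ρ)² − u²q²|λ(k)|²)^{1/2}` -/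
def eE (ν : ℕ) (m μ v u : ℝ) (lam : Kspace ν → ℂ) (k : Kspace ν) (q ρ : ℝ) : ℝ :=
  Real.sqrt (fF ν m μ v k ρ ^ 2 - u ^ 2 * q ^ 2 * ‖lam k‖ ^ 2)

/-- `σ(q,ρ) = vρ − μ − |u|q` -/
def sigma0 (μ v u q ρ : ℝ) : ℝ := v * ρ - μ - |u| * q

/-- The point `(2π/L)·z` of the dual lattice `Λ* = (2π/L)ℤ^ν`. -/
def latticePt (ν : ℕ) (L : ℝ) (z : Fin ν → ℤ) : Kspace ν :=
  (WithLp.equiv 2 (Fin ν → ℝ)).symm fun i => (2 * π / L) * (z i : ℝ)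

/-- integrand of the limiting approximating pressure -/
def p2Int (ν : ℕ) (m μ v u β : ℝ) (lam : Kspace ν → ℂ) (q ρ : ℝ) (k : Kspace ν) : ℝ :=
  -β⁻¹ * Real.log (1 - Real.exp (-β * eE ν m μ v u lam k q ρ))
    - (eE ν m μ v u lam k q ρ - fF ν m μ v k ρ) / 2

/-- `p²(q,ρ)`, the limiting approximating pressure -/
def p2 (ν : ℕ) (m μ v u β : ℝ) (lam : Kspace ν → ℂ) (q ρ : ℝ) : ℝ :=
  (∫ k : Kspace ν, ((2 * π) ^ ν)⁻¹ * p2Int ν m μ v u β lam q ρ k)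
    - u / 2 * q ^ 2 + v / 2 * ρ ^ 2

/-- `p²(q,ρ,η) = p²(q,ρ) + η²/(f(0,ρ) − uq)` -/
def p2eta (ν : ℕ) (m μ v u β : ℝ) (lam : Kspace ν → ℂ) (q ρ η : ℝ) : ℝ :=
  p2 ν m μ v u β lam q ρ + η ^ 2 / (fF ν m μ v 0 ρ - u * q)

/-- `p²_Λ(q,ρ)`, the finite-volume approximating pressure (cube of side `L`, `V = L^ν`) -/
def p2L (ν : ℕ) (m μ v u β L : ℝ) (lam : Kspace ν → ℂ) (q ρ : ℝ) : ℝ :=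
  -(β * L ^ ν)⁻¹ *
      (∑' z : Fin ν → ℤ,
        Real.log (1 - Real.exp (-β * eE ν m μ v u lam (latticePt ν L z) q ρ)))
    - (2 * L ^ ν)⁻¹ *
      (∑' z : Fin ν → ℤ,
        (eE ν m μ v u lam (latticePt ν L z) q ρ - fF ν m μ v (latticePt ν L z) ρ))
    - u / 2 * q ^ 2 + v / 2 * ρ ^ 2

/-- `p²_Λ(q,ρ,η) = p²_Λ(q,ρ) + η²/(f(0,ρ) − uq)` -/
def p2Leta (ν : ℕ) (m μ v u β L : ℝ) (lam : Kspace ν → ℂ) (q ρ η : ℝ) : ℝ :=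
  p2L ν m μ v u β L lam q ρ + η ^ 2 / (fF ν m μ v 0 ρ - u * q)


private lemma aux_sum_shift_le (s a : ℝ) (hs : 1 < s) (ha : 0 < a) (N : ℕ) :
    ∑ i ∈ Finset.range N, (1 + a * ((i : ℝ) + 1)) ^ (-s) ≤ (a * (s - 1))⁻¹ := by
  have ha' : 0 < a * (s - 1) := mul_pos ha (by linarith)
  have hpos : ∀ x : ℝ, 0 ≤ x → (0 : ℝ) < 1 + a * x := by
    intro x hx; nlinarith
  have hanti : AntitoneOn (fun x : ℝ => (1 + a * x) ^ (-s)) (Set.Icc 0 (0 + (N : ℝ))) := by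
    intro x hx y hy hxy
    exact Real.rpow_le_rpow_of_nonpos (hpos x hx.1) (by nlinarith) (by linarith)
  have key := hanti.sum_le_integral
  have hderiv : ∀ x ∈ Set.uIcc (0:ℝ) (N:ℝ),
      HasDerivAt (fun x : ℝ => (1 + a * x) ^ (1 - s) * (-(a * (s - 1))⁻¹))
        ((1 + a * x) ^ (-s)) x := by
    intro x hx
    rw [Set.uIcc_of_le (by positivity)] at hx
    have hx0 : (0:ℝ) ≤ x := hx.1
    have hb : (0:ℝ) < 1 + a * x := hpos x hx0
    have h1 : HasDerivAt (fun x : ℝ => 1 + a * x) a x := by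
      simpa using ((hasDerivAt_id x).const_mul a).const_add 1
    have h2 : HasDerivAt (fun y : ℝ => y ^ (1 - s)) ((1 - s) * (1 + a * x) ^ (1 - s - 1))
        (1 + a * x) := Real.hasDerivAt_rpow_const (Or.inl (ne_of_gt hb))
    have h3 := (h2.comp x h1).mul_const (-(a * (s - 1))⁻¹)
    have heq : (1 + a * x) ^ (-s)
        = (1 - s) * (1 + a * x) ^ (1 - s - 1) * a * -(a * (s - 1))⁻¹ := by
      have : (1 - s - 1) = -s := by ring
      rw [this]
      have hs1' : s - 1 ≠ 0 := by linarith
      have ha0 : a ≠ 0 := ha.ne'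
      field_simp
      ring
    rw [heq]; exact h3
  have hcont : IntervalIntegrable (fun x : ℝ => (1 + a * x) ^ (-s)) volume 0 (N:ℝ) := by
    apply ContinuousOn.intervalIntegrable
    apply ContinuousOn.rpow_const
    · exact (continuous_const.add (continuous_const.mul continuous_id)).continuousOn
    · intro x hx
      rw [Set.uIcc_of_le (by positivity)] at hx
      exact Or.inl (ne_of_gt (hpos x hx.1))
  have hint := intervalIntegral.integral_eq_sub_of_hasDerivAt hderiv hcont
  have heval : ∫ x in (0:ℝ)..(N:ℝ), (1 + a * x) ^ (-s) ≤ (a * (s - 1))⁻¹ := by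
    rw [hint]
    have h1 : (0:ℝ) ≤ (1 + a * N) ^ (1 - s) := Real.rpow_nonneg (by positivity) _
    simp only [mul_zero, add_zero, Real.one_rpow]
    have : (1 + a * ↑N) ^ (1 - s) * (-(a * (s - 1))⁻¹) - 1 * (-(a * (s - 1))⁻¹)
        = (1 - (1 + a * ↑N) ^ (1 - s)) * (a * (s - 1))⁻¹ := by ring
    rw [this]
    have h2 : (1 - (1 + a * ↑N) ^ (1 - s)) ≤ 1 := by linarith
    nlinarith [inv_nonneg.mpr ha'.le]
  calc ∑ i ∈ Finset.range N, (1 + a * ((i : ℝ) + 1)) ^ (-s)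
      = ∑ i ∈ Finset.range N, (fun x : ℝ => (1 + a * x) ^ (-s)) (0 + ((i:ℕ) + 1 : ℕ)) := by
        apply Finset.sum_congr rfl; intro i _; push_cast; ring_nf
    _ ≤ ∫ x in (0:ℝ)..(0 + (N:ℝ)), (1 + a * x) ^ (-s) := key
    _ ≤ (a * (s - 1))⁻¹ := by rw [zero_add] at *; exact heval

private lemma aux_oneDim (s a : ℝ) (hs : 1 < s) (ha : 0 < a) :
    Summable (fun n : ℤ => (1 + a * |(n : ℝ)|) ^ (-s)) ∧
      (∑' n : ℤ, (1 + a * |(n : ℝ)|) ^ (-s)) ≤ 1 + 2 * (a * (s - 1))⁻¹ := by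
  set f : ℤ → ℝ := fun n => (1 + a * |(n : ℝ)|) ^ (-s) with hf
  have hshift_nn : ∀ n : ℕ, (0:ℝ) ≤ (1 + a * ((n:ℝ) + 1)) ^ (-s) :=
    fun n => Real.rpow_nonneg (by positivity) _
  have hSsum : Summable (fun n : ℕ => (1 + a * ((n:ℝ) + 1)) ^ (-s)) :=
    summable_of_sum_range_le hshift_nn (aux_sum_shift_le s a hs ha)
  have hStsum : (∑' n : ℕ, (1 + a * ((n:ℝ) + 1)) ^ (-s)) ≤ (a * (s - 1))⁻¹ :=
    Real.tsum_le_of_sum_range_le hshift_nn (aux_sum_shift_le s a hs ha)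
  have hpos_eq : (fun n : ℕ => f (n : ℤ)) = fun n : ℕ => (1 + a * (n : ℝ)) ^ (-s) := by
    funext n; simp [hf]
  have hposSum : Summable (fun n : ℕ => f (n : ℤ)) := by
    rw [hpos_eq, ← summable_nat_add_iff 1]
    exact hSsum.congr fun n => by push_cast; ring_nf
  have hpos_bound : (∑' n : ℕ, f (n : ℤ)) ≤ 1 + (a * (s - 1))⁻¹ := by
    rw [hpos_eq] at hposSum ⊢
    rw [hposSum.tsum_eq_zero_add]
    simp only [Nat.cast_zero, mul_zero, add_zero, Real.one_rpow, Nat.cast_add, Nat.cast_one]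
    linarith [hStsum]
  have hneg_eq : (fun n : ℕ => f (-((n : ℤ) + 1))) = fun n : ℕ => (1 + a * ((n:ℝ) + 1)) ^ (-s) := by
    funext n
    simp only [hf]
    congr 2
    push_cast
    rw [abs_of_nonpos (by linarith [Nat.cast_nonneg (α := ℝ) n])]
    ring
  have hnegSum : Summable (fun n : ℕ => f (-((n : ℤ) + 1))) := by rw [hneg_eq]; exact hSsum
  refine ⟨Summable.of_nat_of_neg_add_one hposSum hnegSum, ?_⟩
  rw [tsum_of_nat_of_neg_add_one hposSum hnegSum, hneg_eq]
  linarith [hStsum]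

private lemma aux_pi_prod {g : ℤ → ℝ} (hg0 : ∀ x, 0 ≤ g x) (hg : Summable g) (n : ℕ) :
    Summable (fun z : Fin n → ℤ => ∏ i, g (z i)) ∧
      (∑' z : Fin n → ℤ, ∏ i, g (z i)) = (∑' x, g x) ^ n := by
  induction n with
  | zero =>
      constructor
      · exact .of_finite
      · simp
  | succ n ih =>
      obtain ⟨ihs, iht⟩ := ih
      have hh0 : ∀ z : Fin n → ℤ, 0 ≤ ∏ i, g (z i) :=
        fun z => Finset.prod_nonneg fun i _ => hg0 _
      have hg0' : 0 ≤ g := fun x => hg0 x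
      have hh0' : 0 ≤ fun z : Fin n → ℤ => ∏ i, g (z i) := fun z => hh0 z
      have hmul : Summable (fun q : ℤ × (Fin n → ℤ) => g q.1 * ∏ i, g (q.2 i)) :=
        Summable.mul_of_nonneg (f := g) (g := fun z : Fin n → ℤ => ∏ i, g (z i)) hg ihs hg0' hh0'
      set e : ℤ × (Fin n → ℤ) ≃ (Fin (n + 1) → ℤ) := Fin.consEquiv (fun _ => ℤ) with he
      have hcomp : (fun z : Fin (n+1) → ℤ => ∏ i, g (z i)) ∘ e
          = fun q : ℤ × (Fin n → ℤ) => g q.1 * ∏ i, g (q.2 i) := by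
        funext q
        simp only [Function.comp_apply, he, Fin.consEquiv_apply]
        rw [Fin.prod_univ_succ]
        congr 1
      have hsum2 : Summable (fun z : Fin (n+1) → ℤ => ∏ i, g (z i)) := by
        rw [← e.summable_iff, hcomp]; exact hmul
      refine ⟨hsum2, ?_⟩
      have ht := e.tsum_eq (fun z : Fin (n+1) → ℤ => ∏ i, g (z i))
      rw [← ht]
      calc (∑' q : ℤ × (Fin n → ℤ), ∏ i, g ((e q) i))
          = ∑' q : ℤ × (Fin n → ℤ), g q.1 * ∏ i, g (q.2 i) := by
            rw [← hcomp]; rfl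
        _ = ∑' b : ℤ, ∑' c : Fin n → ℤ, g b * ∏ i, g (c i) := hmul.tsum_prod
        _ = ∑' b : ℤ, g b * ∑' c : Fin n → ℤ, ∏ i, g (c i) := by
            congr 1; funext b; exact tsum_mul_left
        _ = (∑' x, g x) * (∑' x, g x) ^ n := by rw [iht, tsum_mul_right]
        _ = (∑' x, g x) ^ (n + 1) := by ring

private lemma aux_comp_le_norm (ν : ℕ) (L : ℝ) (hL : 0 < L) (z : Fin ν → ℤ) (i : Fin ν) :
    2 * π / L * |(z i : ℝ)| ≤ ‖latticePt ν L z‖ := by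
  have hc : 0 ≤ 2 * π / L := by positivity
  have happ : ∀ j, (latticePt ν L z) j = 2 * π / L * (z j : ℝ) := fun j => rfl
  rw [EuclideanSpace.norm_eq]
  have h1 : 2 * π / L * |(z i : ℝ)| = Real.sqrt ((2 * π / L * (z i : ℝ)) ^ 2) := by
    rw [Real.sqrt_sq_eq_abs, abs_mul, abs_of_nonneg hc]
  rw [h1]
  apply Real.sqrt_le_sqrt
  calc (2 * π / L * (z i : ℝ)) ^ 2 = ‖latticePt ν L z i‖ ^ 2 := by
        rw [happ, Real.norm_eq_abs, sq_abs]
    _ ≤ ∑ j, ‖latticePt ν L z j‖ ^ 2 :=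
        Finset.single_le_sum (f := fun j => ‖latticePt ν L z j‖ ^ 2)
          (fun j _ => by positivity) (Finset.mem_univ i)

private lemma aux_lattice_tsum_bound (ν : ℕ) (hν : 1 ≤ ν) (p : ℝ) (hp : (ν : ℝ) < p) :
    ∃ C : ℝ, 0 ≤ C ∧ ∀ L : ℝ, 1 ≤ L →
      Summable (fun z : Fin ν → ℤ => (1 + ‖latticePt ν L z‖) ^ (-p)) ∧
      (∑' z : Fin ν → ℤ, (1 + ‖latticePt ν L z‖) ^ (-p)) ≤ C * L ^ ν := by
  have hν0 : (0:ℝ) < ν := by exact_mod_cast hν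
  set s : ℝ := p / ν with hsdef
  have hs : 1 < s := (one_lt_div hν0).mpr hp
  have hπ : (0:ℝ) < π := Real.pi_pos
  have hs1 : (0:ℝ) < s - 1 := by linarith
  have h2pi : (0:ℝ) < 2 * π * (s - 1) := by positivity
  have h2pi' : (0:ℝ) < (2 * π * (s - 1))⁻¹ := inv_pos.mpr h2pi
  set C1 : ℝ := 1 + 2 * (2 * π * (s - 1))⁻¹ with hC1
  have hC1pos : 0 < C1 := by rw [hC1]; linarith
  refine ⟨C1 ^ ν, pow_nonneg hC1pos.le ν, ?_⟩
  intro L hL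
  have hL0 : (0:ℝ) < L := lt_of_lt_of_le one_pos hL
  set a : ℝ := 2 * π / L with hadef
  have ha : 0 < a := by positivity
  set g : ℤ → ℝ := fun n => (1 + a * |(n : ℝ)|) ^ (-s) with hgdef
  obtain ⟨hgsum, hgbound⟩ := aux_oneDim s a hs ha
  have hg0 : ∀ n, 0 ≤ g n := fun n => Real.rpow_nonneg (by positivity) _
  obtain ⟨hPsum, hPtsum⟩ := aux_pi_prod hg0 hgsum ν
  have hpoint : ∀ z : Fin ν → ℤ,
      (1 + ‖latticePt ν L z‖) ^ (-p) ≤ ∏ i, g (z i) := by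
    intro z
    have hk0 : (0:ℝ) ≤ ‖latticePt ν L z‖ := norm_nonneg _
    have hb : (0:ℝ) < 1 + ‖latticePt ν L z‖ := by linarith
    have h1 : (1 + ‖latticePt ν L z‖) ^ (-p)
        = ((1 + ‖latticePt ν L z‖) ^ (-s)) ^ (ν : ℕ) := by
      rw [← Real.rpow_natCast ((1 + ‖latticePt ν L z‖) ^ (-s)) ν,
        ← Real.rpow_mul hb.le]
      congr 1
      rw [hsdef, neg_mul, div_mul_cancel₀ _ hν0.ne']
    rw [h1]
    calc ((1 + ‖latticePt ν L z‖) ^ (-s)) ^ (ν : ℕ)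
        = ∏ _i : Fin ν, (1 + ‖latticePt ν L z‖) ^ (-s) := by
          rw [Finset.prod_const, Finset.card_univ, Fintype.card_fin]
      _ ≤ ∏ i, g (z i) := by
          apply Finset.prod_le_prod
          · intro i _; exact Real.rpow_nonneg hb.le _
          · intro i _
            apply Real.rpow_le_rpow_of_nonpos (by positivity)
            · have := aux_comp_le_norm ν L hL0 z i
              linarith
            · linarith
  have hnn : ∀ z : Fin ν → ℤ, (0:ℝ) ≤ (1 + ‖latticePt ν L z‖) ^ (-p) := by
    intro z
    have : (0:ℝ) ≤ ‖latticePt ν L z‖ := norm_nonneg _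
    positivity
  have hsum : Summable (fun z : Fin ν → ℤ => (1 + ‖latticePt ν L z‖) ^ (-p)) :=
    Summable.of_nonneg_of_le hnn hpoint hPsum
  refine ⟨hsum, ?_⟩
  have hgb : (∑' n, g n) ≤ C1 * L := by
    have h1 : a * (s - 1) = (2 * π * (s - 1)) / L := by rw [hadef]; ring
    have h2 : (a * (s - 1))⁻¹ = L / (2 * π * (s - 1)) := by rw [h1, inv_div]
    have hx : (0:ℝ) ≤ (2 * π * (s - 1))⁻¹ := h2pi'.le
    calc (∑' n, g n) ≤ 1 + 2 * (a * (s - 1))⁻¹ := hgbound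
      _ = 1 + 2 * (L * (2 * π * (s - 1))⁻¹) := by rw [h2, div_eq_mul_inv]
      _ ≤ L + 2 * (L * (2 * π * (s - 1))⁻¹) := by linarith
      _ = C1 * L := by rw [hC1]; ring
  calc (∑' z : Fin ν → ℤ, (1 + ‖latticePt ν L z‖) ^ (-p))
      ≤ ∑' z : Fin ν → ℤ, ∏ i, g (z i) := Summable.tsum_le_tsum hpoint hsum hPsum
    _ = (∑' n, g n) ^ ν := hPtsum
    _ ≤ (C1 * L) ^ ν := by
        apply pow_le_pow_left₀ (tsum_nonneg hg0) hgb
    _ = C1 ^ ν * L ^ ν := mul_pow _ _ _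

set_option maxHeartbeats 1000000 in
private lemma aux_pointwise
    (ν : ℕ) (hν : 1 ≤ ν) (m : ℝ) (hm : 0 < m)
    (lam : Kspace ν → ℂ) (hlam1 : ∀ k, ‖lam k‖ ≤ 1)
    (c δ : ℝ) (hδ : 0 < δ)
    (hdec : ∀ k : Kspace ν, ‖lam k‖ ≤ c / (1 + ‖k‖ ^ (max (ν : ℝ) ((ν : ℝ) / 2 + 1) + δ))) :
    ∃ Ca Cb : ℝ, 0 ≤ Ca ∧ 0 ≤ Cb ∧
      (∀ k, ‖lam k‖ ≤ Ca * (1 + ‖k‖) ^ (-((ν : ℝ) + δ))) ∧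
      (∀ k, eps ν m k * ‖lam k‖ ^ 2 ≤ Cb * (1 + ‖k‖) ^ (-((ν : ℝ) + δ))) := by
  have hν0 : (1:ℝ) ≤ (ν:ℝ) := by exact_mod_cast hν
  set α : ℝ := max (ν : ℝ) ((ν : ℝ) / 2 + 1) with hα
  set p : ℝ := (ν : ℝ) + δ with hpdef
  set e : ℝ := α + δ with hedef
  have hα1 : (ν:ℝ) ≤ α := le_max_left _ _
  have hα2 : (ν:ℝ)/2 + 1 ≤ α := le_max_right _ _
  have hp0 : (0:ℝ) < p := by rw [hpdef]; linarith
  have he0 : (0:ℝ) < e := by rw [hedef]; linarith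
  have hpe : p ≤ e := by rw [hpdef, hedef]; linarith
  have hc0 : (0:ℝ) ≤ c := by
    have h := hdec 0
    rw [norm_zero, Real.zero_rpow (ne_of_gt he0)] at h
    simpa using le_trans (norm_nonneg _) h
  have h2p : (0:ℝ) < 2 ^ p := Real.rpow_pos_of_pos two_pos p
  -- key 1 : for 0 ≤ x ≤ 1
  have hkey1 : ∀ x : ℝ, 0 ≤ x → x ≤ 1 → (1:ℝ) ≤ 2 ^ p * (1 + x) ^ (-p) := by
    intro x hx0 hx1
    have hb : (0:ℝ) < 1 + x := by linarith
    have h2 : (2:ℝ) ^ (-p) ≤ (1 + x) ^ (-p) :=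
      Real.rpow_le_rpow_of_nonpos hb (by linarith) (by linarith)
    calc (1:ℝ) = 2 ^ p * 2 ^ (-p) := by
          rw [← Real.rpow_add two_pos]; simp
      _ ≤ 2 ^ p * (1 + x) ^ (-p) := by
          exact mul_le_mul_of_nonneg_left h2 h2p.le
  -- key 2 : for 1 ≤ x
  have hkey2 : ∀ x : ℝ, 1 ≤ x → x ^ (-p) ≤ 2 ^ p * (1 + x) ^ (-p) := by
    intro x hx1
    have hx0 : (0:ℝ) < x := lt_of_lt_of_le one_pos hx1
    have hb : (0:ℝ) < 1 + x := by linarith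
    have hA : (1 + x) ^ p ≤ 2 ^ p * x ^ p := by
      calc (1 + x) ^ p ≤ (2 * x) ^ p :=
            Real.rpow_le_rpow hb.le (by linarith) hp0.le
        _ = 2 ^ p * x ^ p := Real.mul_rpow (by norm_num) hx0.le
    have hB : (0:ℝ) < (1 + x) ^ p := Real.rpow_pos_of_pos hb p
    have hC : (0:ℝ) < x ^ p := Real.rpow_pos_of_pos hx0 p
    rw [Real.rpow_neg hx0.le, Real.rpow_neg hb.le]
    calc (x ^ p)⁻¹ = 2 ^ p * (2 ^ p * x ^ p)⁻¹ := by
          rw [mul_inv, ← mul_assoc, mul_inv_cancel₀ (ne_of_gt h2p), one_mul]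
      _ ≤ 2 ^ p * ((1 + x) ^ p)⁻¹ :=
          mul_le_mul_of_nonneg_left (inv_anti₀ hB hA) h2p.le
  -- decay in terms of x^(-e) for 1 ≤ x
  have hdec' : ∀ k : Kspace ν, 1 ≤ ‖k‖ → ‖lam k‖ ≤ c * ‖k‖ ^ (-e) := by
    intro k hx1
    have hx0 : (0:ℝ) < ‖k‖ := lt_of_lt_of_le one_pos hx1
    have hE : (0:ℝ) < ‖k‖ ^ e := Real.rpow_pos_of_pos hx0 e
    calc ‖lam k‖ ≤ c / (1 + ‖k‖ ^ e) := hdec k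
      _ ≤ c / ‖k‖ ^ e := div_le_div_of_nonneg_left hc0 hE (by linarith)
      _ = c * ‖k‖ ^ (-e) := by rw [Real.rpow_neg hx0.le, div_eq_mul_inv]
  refine ⟨(1 + c) * 2 ^ p, (1 + c ^ 2) / (2 * m) * 2 ^ p, by positivity, by positivity, ?_, ?_⟩
  · -- bound on ‖lam k‖
    intro k
    set x : ℝ := ‖k‖ with hxdef
    have hx0 : (0:ℝ) ≤ x := norm_nonneg _
    have hb : (0:ℝ) < 1 + x := by linarith
    have hbp : (0:ℝ) ≤ (1 + x) ^ (-p) := Real.rpow_nonneg hb.le _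
    rcases le_total x 1 with hx1 | hx1
    · calc ‖lam k‖ ≤ 1 := hlam1 k
        _ ≤ 2 ^ p * (1 + x) ^ (-p) := hkey1 x hx0 hx1
        _ ≤ (1 + c) * 2 ^ p * (1 + x) ^ (-p) := by nlinarith [mul_nonneg h2p.le hbp]
    · have hxp : (0:ℝ) < x := lt_of_lt_of_le one_pos hx1
      calc ‖lam k‖ ≤ c * x ^ (-e) := hdec' k hx1
        _ ≤ c * x ^ (-p) := by
            apply mul_le_mul_of_nonneg_left _ hc0
            exact Real.rpow_le_rpow_of_exponent_le hx1 (by linarith)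
        _ ≤ c * (2 ^ p * (1 + x) ^ (-p)) :=
            mul_le_mul_of_nonneg_left (hkey2 x hx1) hc0
        _ ≤ (1 + c) * 2 ^ p * (1 + x) ^ (-p) := by nlinarith [mul_nonneg h2p.le hbp]
  · -- bound on eps * ‖lam k‖²
    intro k
    set x : ℝ := ‖k‖ with hxdef
    have hx0 : (0:ℝ) ≤ x := norm_nonneg _
    have hb : (0:ℝ) < 1 + x := by linarith
    have hbp : (0:ℝ) ≤ (1 + x) ^ (-p) := Real.rpow_nonneg hb.le _
    have hl0 : (0:ℝ) ≤ ‖lam k‖ := norm_nonneg _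
    have heps : eps ν m k = x ^ 2 / (2 * m) := rfl
    rcases le_total x 1 with hx1 | hx1
    · have h1 : eps ν m k * ‖lam k‖ ^ 2 ≤ 1 / (2 * m) := by
        rw [heps]
        have hl1 : ‖lam k‖ ^ 2 ≤ 1 := by nlinarith [hlam1 k]
        have hx2 : x ^ 2 ≤ 1 := by nlinarith
        have hd : (0:ℝ) < 2 * m := by linarith
        rw [div_mul_eq_mul_div, div_le_div_iff₀ hd hd]
        nlinarith [mul_le_mul hx2 hl1 (sq_nonneg ‖lam k‖) zero_le_one]
      calc eps ν m k * ‖lam k‖ ^ 2 ≤ 1 / (2 * m) := h1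
        _ = 1 / (2 * m) * 1 := by ring
        _ ≤ 1 / (2 * m) * (2 ^ p * (1 + x) ^ (-p)) := by
            apply mul_le_mul_of_nonneg_left (hkey1 x hx0 hx1) (by positivity)
        _ ≤ (1 + c ^ 2) / (2 * m) * (2 ^ p * (1 + x) ^ (-p)) := by
            apply mul_le_mul_of_nonneg_right _ (mul_nonneg h2p.le hbp)
            apply div_le_div_of_nonneg_right (by nlinarith [sq_nonneg c]) (by linarith)
        _ = (1 + c ^ 2) / (2 * m) * 2 ^ p * (1 + x) ^ (-p) := by ring
    · have hxp : (0:ℝ) < x := lt_of_lt_of_le one_pos hx1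
      have hl : ‖lam k‖ ≤ c * x ^ (-e) := hdec' k hx1
      have hle0 : (0:ℝ) ≤ x ^ (-e) := Real.rpow_nonneg hx0 _
      have hsq : ‖lam k‖ ^ 2 ≤ c ^ 2 * (x ^ (-e)) ^ 2 := by
        have h := pow_le_pow_left₀ hl0 hl 2
        rwa [mul_pow] at h
      have hxe : x ^ (2:ℕ) * (x ^ (-e)) ^ (2:ℕ) = x ^ (2 - 2 * e) := by
        rw [← Real.rpow_natCast (x ^ (-e)) 2, ← Real.rpow_natCast x 2,
          ← Real.rpow_mul hx0, ← Real.rpow_add hxp]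
        norm_num
        ring_nf
      have hexp : x ^ (2 - 2 * e) ≤ x ^ (-p) := by
        apply Real.rpow_le_rpow_of_exponent_le hx1
        rw [hpdef, hedef]; linarith
      have hmain : eps ν m k * ‖lam k‖ ^ 2 ≤ c ^ 2 / (2 * m) * x ^ (-p) := by
        rw [heps]
        calc x ^ 2 / (2 * m) * ‖lam k‖ ^ 2 ≤ x ^ 2 / (2 * m) * (c ^ 2 * (x ^ (-e)) ^ 2) := by
              apply mul_le_mul_of_nonneg_left hsq (by positivity)
          _ = c ^ 2 / (2 * m) * (x ^ (2:ℕ) * (x ^ (-e)) ^ (2:ℕ)) := by ring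
          _ = c ^ 2 / (2 * m) * x ^ (2 - 2 * e) := by rw [hxe]
          _ ≤ c ^ 2 / (2 * m) * x ^ (-p) := by
              apply mul_le_mul_of_nonneg_left hexp (by positivity)
      calc eps ν m k * ‖lam k‖ ^ 2 ≤ c ^ 2 / (2 * m) * x ^ (-p) := hmain
        _ ≤ c ^ 2 / (2 * m) * (2 ^ p * (1 + x) ^ (-p)) := by
            apply mul_le_mul_of_nonneg_left (hkey2 x hx1) (by positivity)
        _ ≤ (1 + c ^ 2) / (2 * m) * (2 ^ p * (1 + x) ^ (-p)) := by
            apply mul_le_mul_of_nonneg_right _ (mul_nonneg h2p.le hbp)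
            apply div_le_div_of_nonneg_right (by nlinarith [sq_nonneg c]) (by linarith)
        _ = (1 + c ^ 2) / (2 * m) * 2 ^ p * (1 + x) ^ (-p) := by ring

theorem statement0
    (ν : ℕ) (hν : 1 ≤ ν) (m : ℝ) (hm : 0 < m)
    (lam : Kspace ν → ℂ) (hmeas : Measurable lam)
    (hlam1 : ∀ k, ‖lam k‖ ≤ 1)
    (c δ : ℝ) (hδ : 0 < δ)
    (hdec : ∀ k : Kspace ν, ‖lam k‖ ≤ c / (1 + ‖k‖ ^ (max (ν : ℝ) ((ν : ℝ) / 2 + 1) + δ))) :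
    ∃ M : ℝ, ∀ L : ℝ, 1 ≤ L →
      (Summable fun z : Fin ν → ℤ => ‖lam (latticePt ν L z)‖) ∧
      (∑' z : Fin ν → ℤ, ‖lam (latticePt ν L z)‖) ≤ M * L ^ ν ∧
      (Summable fun z : Fin ν → ℤ =>
        eps ν m (latticePt ν L z) * ‖lam (latticePt ν L z)‖ ^ 2) ∧
      (∑' z : Fin ν → ℤ, eps ν m (latticePt ν L z) * ‖lam (latticePt ν L z)‖ ^ 2)
          ≤ M * L ^ ν ∧
      (∀ k : Kspace ν, eps ν m k * ‖lam k‖ ^ 2 ≤ M) := by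
  obtain ⟨Ca, Cb, hCa0, hCb0, hA, hB⟩ := aux_pointwise ν hν m hm lam hlam1 c δ hδ hdec
  have hν0 : (1:ℝ) ≤ (ν:ℝ) := by exact_mod_cast hν
  have hp : (ν:ℝ) < (ν:ℝ) + δ := by linarith
  obtain ⟨C, hC0, hC⟩ := aux_lattice_tsum_bound ν hν ((ν:ℝ) + δ) hp
  set M : ℝ := max (Ca * C) (max (Cb * C) Cb) with hM
  refine ⟨M, ?_⟩
  intro L hL
  obtain ⟨hsum, htsum⟩ := hC L hL
  have hL0 : (0:ℝ) < L := lt_of_lt_of_le one_pos hL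
  have hLν : (0:ℝ) ≤ L ^ ν := by positivity
  set E : (Fin ν → ℤ) → ℝ := fun z => (1 + ‖latticePt ν L z‖) ^ (-((ν:ℝ) + δ)) with hE
  have hEnn : ∀ z, 0 ≤ E z := by
    intro z
    have := norm_nonneg (latticePt ν L z)
    exact Real.rpow_nonneg (by linarith) _
  have hepsnn : ∀ k : Kspace ν, 0 ≤ eps ν m k := by
    intro k
    have : (0:ℝ) ≤ ‖k‖ ^ 2 := sq_nonneg _
    have h2m : (0:ℝ) < 2 * m := by linarith
    exact div_nonneg this h2m.le
  -- (i)
  have hi_le : ∀ z : Fin ν → ℤ, ‖lam (latticePt ν L z)‖ ≤ Ca * E z := fun z => hA _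
  have hi_sum : Summable (fun z : Fin ν → ℤ => ‖lam (latticePt ν L z)‖) :=
    Summable.of_nonneg_of_le (fun z => norm_nonneg _) hi_le (hsum.mul_left Ca)
  have hi_tsum : (∑' z : Fin ν → ℤ, ‖lam (latticePt ν L z)‖) ≤ M * L ^ ν := by
    calc (∑' z : Fin ν → ℤ, ‖lam (latticePt ν L z)‖)
        ≤ ∑' z : Fin ν → ℤ, Ca * E z := Summable.tsum_le_tsum hi_le hi_sum (hsum.mul_left Ca)
      _ = Ca * ∑' z, E z := tsum_mul_left
      _ ≤ Ca * (C * L ^ ν) := mul_le_mul_of_nonneg_left htsum hCa0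
      _ = Ca * C * L ^ ν := by ring
      _ ≤ M * L ^ ν := by
          apply mul_le_mul_of_nonneg_right (le_max_left _ _) hLν
  -- (ii)
  have hii_le : ∀ z : Fin ν → ℤ,
      eps ν m (latticePt ν L z) * ‖lam (latticePt ν L z)‖ ^ 2 ≤ Cb * E z := fun z => hB _
  have hii_nn : ∀ z : Fin ν → ℤ,
      0 ≤ eps ν m (latticePt ν L z) * ‖lam (latticePt ν L z)‖ ^ 2 :=
    fun z => mul_nonneg (hepsnn _) (sq_nonneg _)
  have hii_sum : Summable (fun z : Fin ν → ℤ =>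
      eps ν m (latticePt ν L z) * ‖lam (latticePt ν L z)‖ ^ 2) :=
    Summable.of_nonneg_of_le hii_nn hii_le (hsum.mul_left Cb)
  have hii_tsum : (∑' z : Fin ν → ℤ,
      eps ν m (latticePt ν L z) * ‖lam (latticePt ν L z)‖ ^ 2) ≤ M * L ^ ν := by
    calc (∑' z : Fin ν → ℤ, eps ν m (latticePt ν L z) * ‖lam (latticePt ν L z)‖ ^ 2)
        ≤ ∑' z : Fin ν → ℤ, Cb * E z := Summable.tsum_le_tsum hii_le hii_sum (hsum.mul_left Cb)
      _ = Cb * ∑' z, E z := tsum_mul_left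
      _ ≤ Cb * (C * L ^ ν) := mul_le_mul_of_nonneg_left htsum hCb0
      _ = Cb * C * L ^ ν := by ring
      _ ≤ M * L ^ ν := by
          apply mul_le_mul_of_nonneg_right (le_trans (le_max_left _ _) (le_max_right _ _)) hLν
  refine ⟨hi_sum, hi_tsum, hii_sum, hii_tsum, ?_⟩
  -- (iii)
  intro k
  have h1 : (1:ℝ) ≤ 1 + ‖k‖ := by linarith [norm_nonneg k]
  have h2 : (1 + ‖k‖) ^ (-((ν:ℝ) + δ)) ≤ 1 :=
    Real.rpow_le_one_of_one_le_of_nonpos h1 (by linarith)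
  calc eps ν m k * ‖lam k‖ ^ 2 ≤ Cb * (1 + ‖k‖) ^ (-((ν:ℝ) + δ)) := hB k
    _ ≤ Cb * 1 := mul_le_mul_of_nonneg_left h2 hCb0
    _ = Cb := mul_one _
    _ ≤ M := le_trans (le_max_right _ _) (le_max_right _ _)

end PB
end
end

section
/- If q, ρ ≥ 0 and σ(q,ρ) > 0, then f(k,ρ) > |u| q |λ(k)| for every k ∈ ℝ^ν (so E(k,q,ρ) is well defined and strictly positive for every k), and the function k ↦ −β^{−1} ln(1 − e^{−β E(k,q,ρ)}) − (E(k,q,ρ) − f(k,ρ))/2 is Lebesgue integrable on ℝ^ν; in particular p²(q,ρ) is finite. -/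
open MeasureTheory Real Filter Topology

noncomputable section

namespace PB

lemma PBaux_pow_le (x : ℝ) (hx : 0 ≤ x) (n : ℕ) :
    x ^ n ≤ (n.factorial : ℝ) * Real.exp x := by
  have h2 : x ^ n / (n.factorial:ℝ) ≤ ∑ i ∈ Finset.range (n+1), x ^ i / (i.factorial:ℝ) :=
    Finset.single_le_sum (f := fun i => x ^ i / (i.factorial:ℝ))
      (fun i _ => by positivity) (Finset.self_mem_range_succ n)
  have h := h2.trans (Real.sum_le_exp_of_nonneg hx (n+1))
  have hn : (0:ℝ) < (n.factorial : ℝ) := by positivity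
  calc x ^ n = (x ^ n / (n.factorial:ℝ)) * (n.factorial:ℝ) := by field_simp
  _ ≤ Real.exp x * (n.factorial:ℝ) := by nlinarith
  _ = (n.factorial : ℝ) * Real.exp x := mul_comm _ _

lemma PBaux_exp_decay {a : ℝ} (ha : 0 < a) (n : ℕ) {t : ℝ} (ht : 0 ≤ t) :
    Real.exp (-(a * t)) ≤ ((n.factorial : ℝ) * Real.exp a / a ^ n) * (1 + t) ^ (-(n:ℝ)) := by
  have h1t : (0:ℝ) < 1 + t := by linarith
  have key : (a * (1 + t)) ^ n ≤ (n.factorial : ℝ) * Real.exp (a * (1+t)) :=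
    PBaux_pow_le _ (by positivity) n
  rw [Real.rpow_neg h1t.le, Real.rpow_natCast]
  have han : (0:ℝ) < a ^ n := pow_pos ha n
  have hpn : (0:ℝ) < (1+t) ^ n := pow_pos h1t n
  rw [← div_eq_mul_inv, Real.exp_neg, ← one_div, div_le_div_iff₀ (Real.exp_pos _) hpn]
  rw [mul_pow, show a * (1 + t) = a + a * t from by ring, Real.exp_add] at key
  rw [div_mul_eq_mul_div, le_div_iff₀ han]
  nlinarith [Real.exp_pos (a*t), Real.exp_pos a, Nat.cast_pos (α:=ℝ) |>.mpr (Nat.factorial_pos n)]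

lemma PBaux_one_add_rpow {t α : ℝ} (ht : 0 ≤ t) (hα : 0 ≤ α) :
    (1 + t) ^ α ≤ 2 ^ α * (1 + t ^ α) := by
  have h2 : (0:ℝ) ≤ 2 := by norm_num
  have htα : (0:ℝ) ≤ t ^ α := Real.rpow_nonneg ht α
  have h2α : (0:ℝ) ≤ (2:ℝ) ^ α := Real.rpow_nonneg h2 α
  rcases le_total t 1 with h | h
  · have : (1+t) ^ α ≤ 2 ^ α := Real.rpow_le_rpow (by linarith) (by linarith) hα
    nlinarith
  · have ht0 : (0:ℝ) ≤ 1 + t := by linarith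
    have : (1+t) ^ α ≤ (2*t) ^ α := Real.rpow_le_rpow ht0 (by linarith) hα
    rw [Real.mul_rpow h2 ht] at this
    nlinarith


set_option maxHeartbeats 1000000 in
theorem statement2
    (ν : ℕ) (hν : 1 ≤ ν) (m β μ u v : ℝ) (hm : 0 < m) (hβ : 0 < β)
    (hv : 0 < v) (hvu : 0 < v - u)
    (lam : Kspace ν → ℂ) (hmeas : Measurable lam) (hlam0 : lam 0 = 1)
    (hlam1 : ∀ k, ‖lam k‖ ≤ 1)
    (c δ : ℝ) (hδ : 0 < δ)
    (hdec : ∀ k : Kspace ν, ‖lam k‖ ≤ c / (1 + ‖k‖ ^ (max (ν : ℝ) ((ν : ℝ) / 2 + 1) + δ)))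
    (q ρ : ℝ) (hq : 0 ≤ q) (hρ : 0 ≤ ρ) (hσ : 0 < sigma0 μ v u q ρ) :
    (∀ k : Kspace ν, |u| * q * ‖lam k‖ < fF ν m μ v k ρ) ∧
    (∀ k : Kspace ν, 0 < eE ν m μ v u lam k q ρ) ∧
    Integrable (fun k : Kspace ν =>
      -β⁻¹ * Real.log (1 - Real.exp (-β * eE ν m μ v u lam k q ρ))
        - (eE ν m μ v u lam k q ρ - fF ν m μ v k ρ) / 2) := by

  set σ' := sigma0 μ v u q ρ with hσ'def
  have hw : 0 ≤ |u| * q := mul_nonneg (abs_nonneg u) hq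
  have heps : ∀ k : Kspace ν, 0 ≤ eps ν m k := fun k => by unfold eps; positivity
  have hfval : ∀ k : Kspace ν, fF ν m μ v k ρ = eps ν m k + σ' + |u| * q := by
    intro k; simp only [hσ'def, fF, sigma0]; ring
  have hclaim1 : ∀ k : Kspace ν, |u| * q * ‖lam k‖ < fF ν m μ v k ρ := by
    intro k
    have h1 : |u| * q * ‖lam k‖ ≤ |u| * q := mul_le_of_le_one_right hw (hlam1 k)
    have := heps k
    rw [hfval k]; linarith
  have hfpos : ∀ k : Kspace ν, 0 < fF ν m μ v k ρ := fun k => by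
    rw [hfval k]; have := heps k; linarith
  have hargge : ∀ k : Kspace ν,
      σ' * fF ν m μ v k ρ ≤ fF ν m μ v k ρ ^ 2 - u ^ 2 * q ^ 2 * ‖lam k‖ ^ 2 := by
    intro k
    have hlm2 : ‖lam k‖ ^ 2 ≤ 1 := by nlinarith [hlam1 k, norm_nonneg (lam k)]
    have h1 : u ^ 2 * q ^ 2 * ‖lam k‖ ^ 2 ≤ (|u| * q) ^ 2 := by
      have huv : (0:ℝ) ≤ u ^ 2 * q ^ 2 := by positivity
      calc u ^ 2 * q ^ 2 * ‖lam k‖ ^ 2 ≤ u ^ 2 * q ^ 2 * 1 :=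
            mul_le_mul_of_nonneg_left hlm2 huv
      _ = (|u| * q) ^ 2 := by rw [mul_pow, sq_abs]; ring
    have he := heps k
    rw [hfval k]
    nlinarith [mul_nonneg he hσ.le, mul_nonneg he hw, mul_nonneg hσ.le hw, sq_nonneg (eps ν m k)]
  have hargpos : ∀ k : Kspace ν,
      0 < fF ν m μ v k ρ ^ 2 - u ^ 2 * q ^ 2 * ‖lam k‖ ^ 2 := fun k =>
    lt_of_lt_of_le (mul_pos hσ (hfpos k)) (hargge k)
  have hEsq : ∀ k : Kspace ν,
      eE ν m μ v u lam k q ρ ^ 2 = fF ν m μ v k ρ ^ 2 - u ^ 2 * q ^ 2 * ‖lam k‖ ^ 2 := by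
    intro k; unfold eE; exact Real.sq_sqrt (hargpos k).le
  have hEpos : ∀ k : Kspace ν, 0 < eE ν m μ v u lam k q ρ := by
    intro k; unfold eE; exact Real.sqrt_pos.mpr (hargpos k)
  have hEleF : ∀ k : Kspace ν, eE ν m μ v u lam k q ρ ≤ fF ν m μ v k ρ := by
    intro k; unfold eE
    calc Real.sqrt (fF ν m μ v k ρ ^ 2 - u ^ 2 * q ^ 2 * ‖lam k‖ ^ 2)
        ≤ Real.sqrt (fF ν m μ v k ρ ^ 2) :=
          Real.sqrt_le_sqrt (by nlinarith [sq_nonneg (u * q * ‖lam k‖)])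
    _ = fF ν m μ v k ρ := Real.sqrt_sq (hfpos k).le
  have hEgeσ : ∀ k : Kspace ν, σ' ≤ eE ν m μ v u lam k q ρ := by
    intro k; unfold eE
    have h1 : σ' ^ 2 ≤ fF ν m μ v k ρ ^ 2 - u ^ 2 * q ^ 2 * ‖lam k‖ ^ 2 := by
      have hσf : σ' ≤ fF ν m μ v k ρ := by rw [hfval k]; linarith [heps k]
      nlinarith [hargge k]
    calc σ' = Real.sqrt (σ' ^ 2) := (Real.sqrt_sq hσ.le).symm
    _ ≤ _ := Real.sqrt_le_sqrt h1
  have hEgeK : ∀ k : Kspace ν,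
      Real.sqrt (σ' / (2 * m)) * ‖k‖ ≤ eE ν m μ v u lam k q ρ := by
    intro k
    have hnn : (0:ℝ) ≤ σ' / (2 * m) := by positivity
    have h1 : σ' / (2 * m) * ‖k‖ ^ 2 = σ' * eps ν m k := by unfold eps; field_simp
    have h2 : σ' * eps ν m k ≤ fF ν m μ v k ρ ^ 2 - u ^ 2 * q ^ 2 * ‖lam k‖ ^ 2 := by
      refine le_trans ?_ (hargge k)
      have : eps ν m k ≤ fF ν m μ v k ρ := by rw [hfval k]; linarith
      exact mul_le_mul_of_nonneg_left this hσ.le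
    unfold eE
    calc Real.sqrt (σ' / (2 * m)) * ‖k‖ = Real.sqrt (σ' / (2 * m) * ‖k‖ ^ 2) := by
          rw [Real.sqrt_mul hnn, Real.sqrt_sq (norm_nonneg k)]
    _ ≤ _ := Real.sqrt_le_sqrt (by rw [h1]; exact h2)
  refine ⟨hclaim1, hEpos, ?_⟩
  set α := max (ν : ℝ) ((ν : ℝ) / 2 + 1) + δ with hαdef
  have hν1 : (1:ℝ) ≤ (ν:ℝ) := by exact_mod_cast hν
  have hmax : (ν:ℝ) ≤ max (ν : ℝ) ((ν : ℝ) / 2 + 1) := le_max_left _ _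
  have hαpos : 0 < α := by rw [hαdef]; linarith
  have hνα : (ν:ℝ) < α := by rw [hαdef]; linarith
  have hc1 : 1 ≤ c := by
    have h := hdec 0
    rw [hlam0] at h
    simpa [Real.zero_rpow hαpos.ne'] using h
  have hc0 : 0 ≤ c := by linarith
  set a := β * Real.sqrt (σ' / (2 * m)) with hadef
  have ha : 0 < a := mul_pos hβ (Real.sqrt_pos.mpr (by positivity))
  set d := 1 - Real.exp (-(β * σ')) with hddef
  have hd : 0 < d := by
    have : Real.exp (-(β * σ')) < 1 := Real.exp_lt_one_iff.mpr (by nlinarith)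
    rw [hddef]; linarith
  set C1 := β⁻¹ / d * (((ν+1).factorial : ℝ) * Real.exp a / a ^ (ν+1)) with hC1def
  set C2 := u ^ 2 * q ^ 2 / (2 * σ') * (c * 2 ^ α) with hC2def
  set B := fun k : Kspace ν =>
    C1 * (1 + ‖k‖) ^ (-((ν+1 : ℕ) : ℝ)) + C2 * (1 + ‖k‖) ^ (-α) with hBdef
  have hBint : Integrable B := by
    have hfr : Module.finrank ℝ (Kspace ν) = ν := finrank_euclideanSpace_fin
    refine Integrable.add ?_ ?_
    · refine (integrable_one_add_norm ?_).const_mul C1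
      rw [hfr]; push_cast; linarith
    · refine (integrable_one_add_norm ?_).const_mul C2
      rw [hfr]; exact hνα
  have hfcont : Continuous fun k : Kspace ν => fF ν m μ v k ρ := by
    unfold fF eps; fun_prop
  have hEmeas : Measurable fun k : Kspace ν => eE ν m μ v u lam k q ρ := by
    unfold eE
    exact ((hfcont.measurable.pow_const 2).sub
      (((hmeas.norm).pow_const 2).const_mul _)).sqrt
  have hgmeas : AEStronglyMeasurable (fun k : Kspace ν =>
      -β⁻¹ * Real.log (1 - Real.exp (-β * eE ν m μ v u lam k q ρ))
        - (eE ν m μ v u lam k q ρ - fF ν m μ v k ρ) / 2)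
      (volume : Measure (Kspace ν)) := by
    refine Measurable.aestronglyMeasurable ?_
    exact (((measurable_const.sub ((hEmeas.const_mul (-β)).exp)).log).const_mul (-β⁻¹)).sub
      ((hEmeas.sub hfcont.measurable).div_const 2)
  refine hBint.mono' hgmeas (Filter.Eventually.of_forall fun k => ?_)
  set E := eE ν m μ v u lam k q ρ with hEdef
  set f := fF ν m μ v k ρ with hfdef
  set x := Real.exp (-β * E) with hxdef
  have hxpos : 0 < x := Real.exp_pos _
  have hx2 : x ≤ Real.exp (-(β * σ')) := by
    rw [hxdef]
    refine Real.exp_le_exp.mpr ?_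
    have h := mul_le_mul_of_nonneg_left (hEgeσ k) hβ.le
    linarith
  have hx1 : x ≤ Real.exp (-(a * ‖k‖)) := by
    rw [hxdef]
    refine Real.exp_le_exp.mpr ?_
    have h := mul_le_mul_of_nonneg_left (hEgeK k) hβ.le
    rw [hadef, mul_assoc]
    linarith
  have h1mx : d ≤ 1 - x := by rw [hddef]; linarith
  have h1mxpos : 0 < 1 - x := lt_of_lt_of_le hd h1mx
  have hlog : -Real.log (1 - x) ≤ x / (1 - x) := by
    have h := Real.log_le_sub_one_of_pos (inv_pos.mpr h1mxpos)
    rw [Real.log_inv] at h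
    have heq : (1 - x)⁻¹ - 1 = x / (1 - x) := by field_simp; ring
    linarith [heq ▸ h]
  have hlognn : 0 ≤ -Real.log (1 - x) := by
    have : Real.log (1 - x) ≤ 0 := Real.log_nonpos (by linarith) (by linarith)
    linarith
  have hβinv : 0 < β⁻¹ := inv_pos.mpr hβ
  have hT1 : -β⁻¹ * Real.log (1 - x) ≤ C1 * (1 + ‖k‖) ^ (-((ν+1 : ℕ) : ℝ)) := by
    have hdecay := PBaux_exp_decay ha (ν+1) (norm_nonneg k)
    calc -β⁻¹ * Real.log (1 - x) = β⁻¹ * (-Real.log (1 - x)) := by ring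
    _ ≤ β⁻¹ * (x / (1 - x)) := mul_le_mul_of_nonneg_left hlog hβinv.le
    _ ≤ β⁻¹ * (x / d) := by gcongr
    _ ≤ β⁻¹ * (Real.exp (-(a * ‖k‖)) / d) := by gcongr
    _ = β⁻¹ / d * Real.exp (-(a * ‖k‖)) := by ring
    _ ≤ β⁻¹ / d * ((((ν+1).factorial : ℝ) * Real.exp a / a ^ (ν+1)) *
          (1 + ‖k‖) ^ (-((ν+1 : ℕ) : ℝ))) :=
        mul_le_mul_of_nonneg_left hdecay (by positivity)
    _ = C1 * (1 + ‖k‖) ^ (-((ν+1 : ℕ) : ℝ)) := by rw [hC1def]; ring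
  have hfE : 0 ≤ f - E := sub_nonneg.mpr (hEleF k)
  have hkey : (f - E) * σ' ≤ u ^ 2 * q ^ 2 * ‖lam k‖ ^ 2 := by
    have h := mul_le_mul_of_nonneg_left
      (show σ' ≤ f + E by linarith [hEgeσ k, hfpos k]) hfE
    nlinarith [hEsq k]
  have hT2a : (f - E) / 2 ≤ u ^ 2 * q ^ 2 * ‖lam k‖ ^ 2 / (2 * σ') := by
    rw [div_le_div_iff₀ (by norm_num) (by positivity)]
    nlinarith
  have hlmb : ‖lam k‖ ≤ c * 2 ^ α * (1 + ‖k‖) ^ (-α) := by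
    have h := hdec k
    have h1t : (0:ℝ) < 1 + ‖k‖ := by positivity
    have h2 : (1 + ‖k‖) ^ α ≤ 2 ^ α * (1 + ‖k‖ ^ α) :=
      PBaux_one_add_rpow (norm_nonneg k) hαpos.le
    have h3 : (0:ℝ) < 1 + ‖k‖ ^ α := by
      have := Real.rpow_nonneg (norm_nonneg k) α; linarith
    have h5 : (0:ℝ) < (1 + ‖k‖) ^ α := Real.rpow_pos_of_pos h1t α
    refine le_trans h ?_
    rw [Real.rpow_neg h1t.le, ← div_eq_mul_inv, div_le_div_iff₀ h3 h5]
    calc c * (1 + ‖k‖) ^ α ≤ c * (2 ^ α * (1 + ‖k‖ ^ α)) := mul_le_mul_of_nonneg_left h2 hc0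
    _ = c * 2 ^ α * (1 + ‖k‖ ^ α) := by ring
  have hlm2 : ‖lam k‖ ^ 2 ≤ ‖lam k‖ := by nlinarith [hlam1 k, norm_nonneg (lam k)]
  have hT2 : (f - E) / 2 ≤ C2 * (1 + ‖k‖) ^ (-α) := by
    have huq : (0:ℝ) ≤ u ^ 2 * q ^ 2 / (2 * σ') := by positivity
    calc (f - E) / 2 ≤ u ^ 2 * q ^ 2 * ‖lam k‖ ^ 2 / (2 * σ') := hT2a
    _ = u ^ 2 * q ^ 2 / (2 * σ') * ‖lam k‖ ^ 2 := by ring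
    _ ≤ u ^ 2 * q ^ 2 / (2 * σ') * ‖lam k‖ := by
        refine mul_le_mul_of_nonneg_left ?_ huq
        exact hlm2
    _ ≤ u ^ 2 * q ^ 2 / (2 * σ') * (c * 2 ^ α * (1 + ‖k‖) ^ (-α)) :=
        mul_le_mul_of_nonneg_left hlmb huq
    _ = C2 * (1 + ‖k‖) ^ (-α) := by rw [hC2def]; ring
  have hg0 : 0 ≤ -β⁻¹ * Real.log (1 - x) - (E - f) / 2 := by nlinarith
  rw [Real.norm_eq_abs, abs_of_nonneg hg0]
  have hrng : -β⁻¹ * Real.log (1 - x) - (E - f) / 2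
      = -β⁻¹ * Real.log (1 - x) + (f - E) / 2 := by ring
  rw [hrng, hBdef]
  exact add_le_add hT1 hT2

end PB
end
end

section
/- Fix q ≥ 0 and η ≥ 0. On the open set {ρ ≥ 0 : σ(q,ρ) > 0}, the map ρ ↦ p²(q,ρ,η) is differentiable and its derivative equals −v ∫_{ℝ^ν} (2π)^{−ν} { (e^{β E(k,q,ρ)} − 1)^{−1} · f(k,ρ)/E(k,q,ρ) + (1/2)( f(k,ρ)/E(k,q,ρ) − 1 ) } dk − v η²/(f(0,ρ) − uq)² + vρ. -/
open MeasureTheory Real Filter Topology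

noncomputable section

namespace PB

lemma integrable_gauss {ν : ℕ} {b : ℝ} (hb : 0 < b) :
    Integrable (fun k : Kspace ν => Real.exp (-b * ‖k‖^2)) := by
  have h := (GaussianFourier.integrable_cexp_neg_mul_sq_norm_add (V := Kspace ν) (b := (b:ℂ))
    (by simpa using hb) 0 (0 : Kspace ν)).norm
  refine h.congr (Eventually.of_forall fun k => ?_)
  simp only [Complex.norm_exp]
  congr 1
  simp [← Complex.ofReal_pow, Complex.mul_re]

lemma integrable_jap {ν : ℕ} {p : ℝ} (hp : (ν:ℝ) < p) :
    Integrable (fun k : Kspace ν => (1+‖k‖) ^ (-p)) := by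
  exact integrable_one_add_norm (μ := (volume : Measure (Kspace ν)))
    (by simpa [finrank_euclideanSpace_fin] using hp)

variable {ν : ℕ} {m μ v u β q : ℝ} {lam : Kspace ν → ℂ}

lemma eps_nonneg (hm : 0 < m) (k : Kspace ν) : 0 ≤ eps ν m k := by
  unfold eps; positivity

lemma fF_eq (k : Kspace ν) (r : ℝ) :
    fF ν m μ v k r = eps ν m k + sigma0 μ v u q r + |u| * q := by
  unfold fF sigma0; ring

/-- main pointwise bounds: E ≥ ε + σ, E ≤ f, E² = f² − a -/
lemma key_bounds (hm : 0 < m) (hq : 0 ≤ q) {r : ℝ} (hσ : 0 < sigma0 μ v u q r)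
    (k : Kspace ν) (hl : ‖lam k‖ ≤ 1) :
    eps ν m k + sigma0 μ v u q r ≤ eE ν m μ v u lam k q r ∧
    eE ν m μ v u lam k q r ≤ fF ν m μ v k r ∧
    eE ν m μ v u lam k q r ^ 2 = fF ν m μ v k r ^ 2 - u^2*q^2*‖lam k‖^2 := by
  have hε := eps_nonneg (ν := ν) hm k
  have hf := fF_eq (ν := ν) (m := m) (μ := μ) (v := v) (u := u) (q := q) k r
  have hl0 : (0:ℝ) ≤ ‖lam k‖ := norm_nonneg _
  have ha0 : (0:ℝ) ≤ u^2*q^2*‖lam k‖^2 := by positivity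
  have ha1 : u^2*q^2*‖lam k‖^2 ≤ (|u| * q)^2 := by
    have h2 : ‖lam k‖^2 ≤ 1 := by nlinarith
    have hu : (|u| * q)^2 = u^2*q^2 := by rw [mul_pow, sq_abs]
    nlinarith [sq_nonneg u, sq_nonneg q]
  have huq : 0 ≤ |u| * q := by positivity
  have hrad : (eps ν m k + sigma0 μ v u q r)^2 ≤ fF ν m μ v k r ^ 2 - u^2*q^2*‖lam k‖^2 := by
    nlinarith
  have hεσ : 0 ≤ eps ν m k + sigma0 μ v u q r := by linarith
  have hfpos : 0 ≤ fF ν m μ v k r := by rw [hf]; linarith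
  refine ⟨?_, ?_, ?_⟩
  · rw [eE, show eps ν m k + sigma0 μ v u q r = Real.sqrt ((eps ν m k + sigma0 μ v u q r)^2) from
      (Real.sqrt_sq hεσ).symm]
    exact Real.sqrt_le_sqrt hrad
  · rw [eE]
    calc Real.sqrt (fF ν m μ v k r ^ 2 - u^2*q^2*‖lam k‖^2)
        ≤ Real.sqrt (fF ν m μ v k r ^ 2) := Real.sqrt_le_sqrt (by linarith)
      _ = fF ν m μ v k r := Real.sqrt_sq hfpos
  · rw [eE, Real.sq_sqrt (by nlinarith)]

lemma hasDerivAt_p2Int (hm : 0 < m) (hβ : 0 < β) (hq : 0 ≤ q) {r : ℝ}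
    (hσ : 0 < sigma0 μ v u q r) (k : Kspace ν) (hl : ‖lam k‖ ≤ 1) :
    HasDerivAt (fun x : ℝ => p2Int ν m μ v u β lam q x k)
      (-v * ((Real.exp (β * eE ν m μ v u lam k q r) - 1)⁻¹ *
            (fF ν m μ v k r / eE ν m μ v u lam k q r)
          + (1 / 2) * (fF ν m μ v k r / eE ν m μ v u lam k q r - 1))) r := by
  obtain ⟨h1, h2, h3⟩ := key_bounds hm hq hσ k hl
  have hε := eps_nonneg (ν := ν) hm k
  set E := eE ν m μ v u lam k q r with hE
  set f := fF ν m μ v k r with hf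
  have hE0 : 0 < E := lt_of_lt_of_le (by linarith) h1
  have hrad_pos : 0 < f ^ 2 - u^2*q^2*‖lam k‖^2 := by rw [← h3]; positivity
  -- derivative of f
  have hfd : HasDerivAt (fun x => fF ν m μ v k x) v r := by
    have h := ((hasDerivAt_id r).const_mul v).const_add (eps ν m k - μ)
    simpa [fF, mul_one] using h
  -- derivative of the radicand
  have hradd : HasDerivAt (fun x => fF ν m μ v k x ^ 2 - u^2*q^2*‖lam k‖^2)
      ((2:ℕ) * f ^ 1 * v) r := (hfd.pow 2).sub_const _
  -- derivative of E
  have hEd : HasDerivAt (fun x => eE ν m μ v u lam k q x)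
      (((2:ℕ) * f ^ 1 * v) / (2 * E)) r := by
    have h := hradd.sqrt (ne_of_gt hrad_pos)
    convert h using 2 <;> simp only [hE, eE]
  have hEd' : HasDerivAt (fun x => eE ν m μ v u lam k q x) (v * f / E) r := by
    convert hEd using 1
    field_simp
    ring
  -- inner of log
  have hexp : HasDerivAt (fun x => Real.exp (-β * eE ν m μ v u lam k q x))
      (Real.exp (-β * E) * (-β * (v * f / E))) r := by
    have := (hEd'.const_mul (-β)).exp
    simpa [mul_comm] using this
  have hlog_arg_pos : 0 < 1 - Real.exp (-β * E) := by
    have : Real.exp (-β * E) < 1 := by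
      rw [Real.exp_lt_one_iff]
      nlinarith
    linarith
  have hlog : HasDerivAt (fun x => Real.log (1 - Real.exp (-β * eE ν m μ v u lam k q x)))
      ((-(Real.exp (-β * E) * (-β * (v * f / E)))) / (1 - Real.exp (-β * E))) r := by
    have h := ((hexp.const_sub 1)).log (ne_of_gt hlog_arg_pos)
    exact h
  have htotal : HasDerivAt (fun x : ℝ => p2Int ν m μ v u β lam q x k)
      (-β⁻¹ * ((-(Real.exp (-β * E) * (-β * (v * f / E)))) / (1 - Real.exp (-β * E)))
        - (v * f / E - v) / 2) r := by
    exact (hlog.const_mul (-β⁻¹)).sub ((hEd'.sub hfd).div_const 2)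
  convert htotal using 1
  have hEexp : Real.exp (β * E) - 1 > 0 := by
    have : (1:ℝ) < Real.exp (β * E) := by
      rw [show (1:ℝ) = Real.exp 0 from (Real.exp_zero).symm]
      exact Real.exp_lt_exp.mpr (by positivity)
    linarith
  have hexp_ne : Real.exp (β * E) - 1 ≠ 0 := ne_of_gt hEexp
  have hne1 : (1 - Real.exp (-β * E)) ≠ 0 := ne_of_gt hlog_arg_pos
  have hEne : E ≠ 0 := ne_of_gt hE0
  have hβne : β ≠ 0 := ne_of_gt hβ
  have hrw : Real.exp (-β * E) = (Real.exp (β * E))⁻¹ := by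
    rw [← Real.exp_neg]; ring_nf
  rw [hrw]
  have hexp_pos : 0 < Real.exp (β * E) := Real.exp_pos _
  field_simp
  ring

lemma measurable_eE (hmeas : Measurable lam) (r : ℝ) :
    Measurable (fun k : Kspace ν => eE ν m μ v u lam k q r) := by
  unfold eE fF eps
  fun_prop

lemma measurable_p2Int (hmeas : Measurable lam) (r : ℝ) :
    Measurable (fun k : Kspace ν => p2Int ν m μ v u β lam q r k) := by
  have hE := measurable_eE (ν := ν) (m := m) (μ := μ) (v := v) (u := u) (q := q) hmeas r
  unfold p2Int
  apply Measurable.sub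
  · apply Measurable.const_mul
    exact Real.measurable_log.comp ((hE.const_mul (-β)).exp.const_sub 1)
  · apply Measurable.div_const
    apply hE.sub
    unfold fF eps; fun_prop

lemma measurable_F' (hmeas : Measurable lam) (r : ℝ) :
    Measurable (fun k : Kspace ν =>
      (Real.exp (β * eE ν m μ v u lam k q r) - 1)⁻¹ *
          (fF ν m μ v k r / eE ν m μ v u lam k q r)
        + (1 / 2) * (fF ν m μ v k r / eE ν m μ v u lam k q r - 1)) := by
  unfold eE fF eps
  fun_prop

lemma lam_decay {c : ℝ} {p : ℝ} (hp1 : 1 ≤ p) (hlam0 : lam 0 = 1)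
    (hdec : ∀ k : Kspace ν, ‖lam k‖ ≤ c / (1 + ‖k‖ ^ p)) :
    ∀ k : Kspace ν, ‖lam k‖ ≤ 2 ^ p * c * (1 + ‖k‖) ^ (-p) := by
  have hp0 : 0 < p := by linarith
  have hc : 1 ≤ c := by
    have h := hdec 0
    rw [hlam0] at h
    simp only [norm_zero, Real.zero_rpow (ne_of_gt hp0)] at h
    simpa using h
  intro k
  set x := ‖k‖ with hx
  have hx0 : (0:ℝ) ≤ x := norm_nonneg _
  have hxp0 : (0:ℝ) ≤ x ^ p := Real.rpow_nonneg hx0 p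
  have h2 : (1 + x) ^ p ≤ 2 ^ p * (1 + x ^ p) := by
    rcases le_or_gt x 1 with hx1 | hx1
    · have : (1 + x) ^ p ≤ 2 ^ p :=
        Real.rpow_le_rpow (by linarith) (by linarith) (le_of_lt hp0)
      nlinarith [Real.rpow_pos_of_pos (show (0:ℝ) < 2 by norm_num) p]
    · have h1x : (1 + x) ^ p ≤ (2 * x) ^ p :=
        Real.rpow_le_rpow (by linarith) (by linarith) (le_of_lt hp0)
      rw [Real.mul_rpow (by norm_num) hx0] at h1x
      nlinarith [Real.rpow_pos_of_pos (show (0:ℝ) < 2 by norm_num) p]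
  have hden1 : (0:ℝ) < 1 + x ^ p := by linarith
  have hden2 : (0:ℝ) < (1 + x) ^ p := Real.rpow_pos_of_pos (by linarith) p
  calc ‖lam k‖ ≤ c / (1 + x ^ p) := hdec k
    _ ≤ 2 ^ p * c / (1 + x) ^ p := by
        rw [div_le_div_iff₀ hden1 hden2]
        calc c * (1 + x) ^ p ≤ c * (2 ^ p * (1 + x ^ p)) := by
              apply mul_le_mul_of_nonneg_left h2 (by linarith)
          _ = 2 ^ p * c * (1 + x ^ p) := by ring
    _ = 2 ^ p * c * (1 + x) ^ (-p) := by
        rw [Real.rpow_neg (by linarith)]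
        ring

/-- Bound for `(e^{βE}-1)⁻¹` -/
lemma inv_exp_bound (hm : 0 < m) (hβ : 0 < β) (hq : 0 ≤ q) {s0 r : ℝ} (hs0 : 0 < s0)
    (hs : s0 ≤ sigma0 μ v u q r) (k : Kspace ν) (hl : ‖lam k‖ ≤ 1) :
    (Real.exp (β * eE ν m μ v u lam k q r) - 1)⁻¹ ≤
      Real.exp (-β * s0) / (1 - Real.exp (-β * s0)) * Real.exp (-β * eps ν m k) ∧
    (0:ℝ) < Real.exp (β * eE ν m μ v u lam k q r) - 1 ∧
    Real.exp (-β * eE ν m μ v u lam k q r) ≤ Real.exp (-β * s0) * Real.exp (-β * eps ν m k) ∧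
    1 - Real.exp (-β * s0) ≤ 1 - Real.exp (-β * eE ν m μ v u lam k q r) ∧
    (0:ℝ) < 1 - Real.exp (-β * s0) := by
  obtain ⟨h1, h2, h3⟩ := key_bounds hm hq (lt_of_lt_of_le hs0 hs) k hl
  have hε := eps_nonneg (ν := ν) hm k
  set E := eE ν m μ v u lam k q r with hE
  have hEes : eps ν m k + s0 ≤ E := le_trans (by linarith) h1
  have hEs : s0 ≤ E := by linarith
  have hlo : (0:ℝ) < 1 - Real.exp (-β * s0) := by
    have : Real.exp (-β * s0) < 1 := by
      rw [show (1:ℝ) = Real.exp 0 from Real.exp_zero.symm]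
      exact Real.exp_lt_exp.mpr (by nlinarith)
    linarith
  have hexpE : Real.exp (-β * E) ≤ Real.exp (-β * s0) * Real.exp (-β * eps ν m k) := by
    rw [← Real.exp_add]
    exact Real.exp_le_exp.mpr (by nlinarith)
  have hmono : 1 - Real.exp (-β * s0) ≤ 1 - Real.exp (-β * E) := by
    have : Real.exp (-β * E) ≤ Real.exp (-β * s0) := Real.exp_le_exp.mpr (by nlinarith)
    linarith
  have hEpos : (0:ℝ) < Real.exp (β * E) - 1 := by
    have : (1:ℝ) < Real.exp (β * E) := by
      rw [show (1:ℝ) = Real.exp 0 from Real.exp_zero.symm]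
      exact Real.exp_lt_exp.mpr (by nlinarith)
    linarith
  refine ⟨?_, hEpos, hexpE, hmono, hlo⟩
  have hid : (Real.exp (β * E) - 1)⁻¹ = Real.exp (-β * E) / (1 - Real.exp (-β * E)) := by
    have hgt : (1:ℝ) < Real.exp (β * E) := by linarith
    have hinv : (Real.exp (β * E))⁻¹ < 1 := inv_lt_one_of_one_lt₀ hgt
    rw [neg_mul, Real.exp_neg, eq_div_iff (by linarith : 1 - (Real.exp (β * E))⁻¹ ≠ 0)]
    field_simp
  rw [hid]
  calc Real.exp (-β * E) / (1 - Real.exp (-β * E))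
      ≤ (Real.exp (-β * s0) * Real.exp (-β * eps ν m k)) / (1 - Real.exp (-β * s0)) := by
        apply div_le_div₀ (by positivity) hexpE hlo hmono
    _ = Real.exp (-β * s0) / (1 - Real.exp (-β * s0)) * Real.exp (-β * eps ν m k) := by ring

/-- Bounds on `f/E`. -/
lemma fdivE_bound (hm : 0 < m) (hq : 0 ≤ q) {s0 r : ℝ} (hs0 : 0 < s0)
    (hs : s0 ≤ sigma0 μ v u q r) (k : Kspace ν) (hl : ‖lam k‖ ≤ 1) :
    1 ≤ fF ν m μ v k r / eE ν m μ v u lam k q r ∧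
    fF ν m μ v k r / eE ν m μ v u lam k q r - 1 ≤ u^2*q^2*‖lam k‖^2 / (2*s0^2) ∧
    fF ν m μ v k r - eE ν m μ v u lam k q r ≤ u^2*q^2*‖lam k‖^2 / (2*s0) := by
  obtain ⟨h1, h2, h3⟩ := key_bounds hm hq (lt_of_lt_of_le hs0 hs) k hl
  have hε := eps_nonneg (ν := ν) hm k
  set E := eE ν m μ v u lam k q r with hE
  set f := fF ν m μ v k r with hf
  set a := u^2*q^2*‖lam k‖^2 with ha
  have ha0 : (0:ℝ) ≤ a := by rw [ha]; positivity
  have hEs : s0 ≤ E := by linarith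
  have hE0 : (0:ℝ) < E := by linarith
  have e1 : (f - E) * (f + E) = a := by nlinarith [h3]
  have e2 : (f - E) * (2*E) ≤ a := by nlinarith [sq_nonneg (f - E)]
  refine ⟨?_, ?_, ?_⟩
  · rw [le_div_iff₀ hE0]; linarith
  · rw [div_sub_one (ne_of_gt hE0), div_le_div_iff₀ hE0 (by positivity)]
    nlinarith [mul_le_mul_of_nonneg_right e2 (le_of_lt hE0),
      mul_le_mul_of_nonneg_left (mul_self_le_mul_self (le_of_lt hs0) hEs) (sub_nonneg.2 h2)]
  · rw [le_div_iff₀ (by linarith : (0:ℝ) < 2*s0)]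
    nlinarith [mul_le_mul_of_nonneg_left hEs (sub_nonneg.2 h2)]

/-- Bound for `|p2Int|`. -/
lemma p2Int_bound (hm : 0 < m) (hβ : 0 < β) (hq : 0 ≤ q) {s0 r : ℝ} (hs0 : 0 < s0)
    (hs : s0 ≤ sigma0 μ v u q r) (k : Kspace ν) (hl : ‖lam k‖ ≤ 1) :
    |p2Int ν m μ v u β lam q r k| ≤
      β⁻¹ * (Real.exp (-β * s0) / (1 - Real.exp (-β * s0))) * Real.exp (-β * eps ν m k)
      + u^2*q^2*‖lam k‖^2 / (4*s0) := by
  obtain ⟨hinv, hEpos, hexpE, hmono, hlo⟩ := inv_exp_bound hm hβ hq hs0 hs k hl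
  obtain ⟨hge1, hsub, hfme⟩ := fdivE_bound hm hq hs0 hs k hl
  obtain ⟨h1, h2, h3⟩ := key_bounds hm hq (lt_of_lt_of_le hs0 hs) k hl
  have hε := eps_nonneg (ν := ν) hm k
  set E := eE ν m μ v u lam k q r with hE
  set f := fF ν m μ v k r with hf
  set x := Real.exp (-β * E) with hx
  have hx0 : 0 < x := Real.exp_pos _
  have hx1 : 0 < 1 - x := by linarith
  have hlogpos : 0 ≤ -Real.log (1 - x) := by
    have := Real.log_nonpos (by linarith) (by linarith : 1 - x ≤ 1)
    linarith
  have hlogle : -Real.log (1 - x) ≤ (Real.exp (β * E) - 1)⁻¹ := by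
    have h4 : Real.log ((1 - x)⁻¹) ≤ (1 - x)⁻¹ - 1 :=
      Real.log_le_sub_one_of_pos (by positivity)
    rw [Real.log_inv] at h4
    have h5 : (1 - x)⁻¹ - 1 = x / (1 - x) := by field_simp; ring
    have h6 : x / (1 - x) = (Real.exp (β * E) - 1)⁻¹ := by
      rw [hx, neg_mul, Real.exp_neg]
      have := Real.exp_pos (β * E)
      field_simp
    linarith [h4, h5 ▸ h4, h6 ▸ (h5 ▸ h4)]
  have hA : 0 ≤ -β⁻¹ * Real.log (1 - x) ∧
      -β⁻¹ * Real.log (1 - x) ≤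
        β⁻¹ * (Real.exp (-β * s0) / (1 - Real.exp (-β * s0))) * Real.exp (-β * eps ν m k) := by
    constructor
    · have hβi : 0 ≤ β⁻¹ := by positivity
      nlinarith
    · have hβi : 0 ≤ β⁻¹ := by positivity
      calc -β⁻¹ * Real.log (1 - x) = β⁻¹ * (-Real.log (1 - x)) := by ring
        _ ≤ β⁻¹ * ((Real.exp (β * E) - 1)⁻¹) := by
            apply mul_le_mul_of_nonneg_left hlogle hβi
        _ ≤ β⁻¹ * (Real.exp (-β * s0) / (1 - Real.exp (-β * s0)) * Real.exp (-β * eps ν m k)) := by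
            apply mul_le_mul_of_nonneg_left hinv hβi
        _ = _ := by ring
  have hB : 0 ≤ (f - E) / 2 ∧ (f - E) / 2 ≤ u^2*q^2*‖lam k‖^2 / (4*s0) := by
    constructor
    · linarith
    · calc (f - E)/2 ≤ (u^2*q^2*‖lam k‖^2 / (2*s0))/2 := by linarith
        _ = u^2*q^2*‖lam k‖^2 / (4*s0) := by ring
  rw [p2Int]
  rw [abs_of_nonneg (by push_cast; linarith [hA.1, hB.1] : (0:ℝ) ≤ _)]
  push_cast
  linarith [hA.2, hB.2]

/-- Bound for the derivative integrand `G`. -/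
lemma G_bound (hm : 0 < m) (hβ : 0 < β) (hq : 0 ≤ q) {s0 r : ℝ} (hs0 : 0 < s0)
    (hs : s0 ≤ sigma0 μ v u q r) (k : Kspace ν) (hl : ‖lam k‖ ≤ 1) :
    0 ≤ (Real.exp (β * eE ν m μ v u lam k q r) - 1)⁻¹ *
          (fF ν m μ v k r / eE ν m μ v u lam k q r)
        + (1 / 2) * (fF ν m μ v k r / eE ν m μ v u lam k q r - 1) ∧
      (Real.exp (β * eE ν m μ v u lam k q r) - 1)⁻¹ *
          (fF ν m μ v k r / eE ν m μ v u lam k q r)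
        + (1 / 2) * (fF ν m μ v k r / eE ν m μ v u lam k q r - 1) ≤
      (1 + u^2*q^2/(2*s0^2)) * (Real.exp (-β * s0) / (1 - Real.exp (-β * s0)))
          * Real.exp (-β * eps ν m k)
        + u^2*q^2*‖lam k‖^2 / (4*s0^2) := by
  obtain ⟨hinv, hEpos, hexpE, hmono, hlo⟩ := inv_exp_bound hm hβ hq hs0 hs k hl
  obtain ⟨hge1, hsub, hfme⟩ := fdivE_bound hm hq hs0 hs k hl
  have hε := eps_nonneg (ν := ν) hm k
  set E := eE ν m μ v u lam k q r with hE
  set f := fF ν m μ v k r with hf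
  have hinv0 : 0 ≤ (Real.exp (β * E) - 1)⁻¹ := by positivity
  have hl2 : ‖lam k‖^2 ≤ 1 := by nlinarith [norm_nonneg (lam k)]
  have ha1 : u^2*q^2*‖lam k‖^2 ≤ u^2*q^2 := by
    nlinarith [mul_nonneg (mul_nonneg (sq_nonneg u) (sq_nonneg q))
      (by linarith : (0:ℝ) ≤ 1 - ‖lam k‖^2)]
  have hA0 : 0 ≤ Real.exp (-β * s0) / (1 - Real.exp (-β * s0)) * Real.exp (-β * eps ν m k) :=
    mul_nonneg (div_nonneg (Real.exp_pos _).le hlo.le) (Real.exp_pos _).le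
  have hCq : f / E ≤ 1 + u^2*q^2/(2*s0^2) := by
    have h7 : u^2*q^2*‖lam k‖^2 / (2*s0^2) ≤ u^2*q^2/(2*s0^2) := by
      gcongr
    linarith
  constructor
  · have : 0 ≤ f / E := by linarith
    have h8 : 0 ≤ (Real.exp (β * E) - 1)⁻¹ * (f / E) := mul_nonneg hinv0 this
    nlinarith
  · have hmul : (Real.exp (β * E) - 1)⁻¹ * (f / E) ≤
        (Real.exp (-β * s0) / (1 - Real.exp (-β * s0)) * Real.exp (-β * eps ν m k))
          * (1 + u^2*q^2/(2*s0^2)) := by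
      apply mul_le_mul hinv hCq (by linarith) hA0
    have h9 : (1/2 : ℝ) * (f / E - 1) ≤ u^2*q^2*‖lam k‖^2 / (4*s0^2) := by
      calc (1/2 : ℝ) * (f / E - 1) ≤ (1/2) * (u^2*q^2*‖lam k‖^2 / (2*s0^2)) := by linarith
        _ = u^2*q^2*‖lam k‖^2 / (4*s0^2) := by ring
    nlinarith [hmul, h9]

lemma integrable_exp_eps {ν : ℕ} {m β : ℝ} (hm : 0 < m) (hβ : 0 < β) :
    Integrable (fun k : Kspace ν => Real.exp (-β * eps ν m k)) := by
  have h := integrable_gauss (ν := ν) (b := β/(2*m)) (by positivity)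
  have he : ∀ k : Kspace ν, -(β/(2*m)) * ‖k‖^2 = -β * eps ν m k := by
    intro k; unfold eps; field_simp
  simpa only [he] using h

theorem statement6
    (ν : ℕ) (hν : 1 ≤ ν) (m β μ u v : ℝ) (hm : 0 < m) (hβ : 0 < β)
    (hv : 0 < v) (hvu : 0 < v - u)
    (lam : Kspace ν → ℂ) (hmeas : Measurable lam) (hlam0 : lam 0 = 1)
    (hlam1 : ∀ k, ‖lam k‖ ≤ 1)
    (c δ : ℝ) (hδ : 0 < δ)
    (hdec : ∀ k : Kspace ν, ‖lam k‖ ≤ c / (1 + ‖k‖ ^ (max (ν : ℝ) ((ν : ℝ) / 2 + 1) + δ)))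
    (q : ℝ) (hq : 0 ≤ q) (η : ℝ) (hη : 0 ≤ η) :
    ∀ ρ : ℝ, 0 ≤ ρ → 0 < sigma0 μ v u q ρ →
      HasDerivAt (fun r : ℝ => p2eta ν m μ v u β lam q r η)
        (-v * (∫ k : Kspace ν, ((2 * π) ^ ν)⁻¹ *
            ((Real.exp (β * eE ν m μ v u lam k q ρ) - 1)⁻¹ *
                (fF ν m μ v k ρ / eE ν m μ v u lam k q ρ)
              + (1 / 2) * (fF ν m μ v k ρ / eE ν m μ v u lam k q ρ - 1)))
          - v * η ^ 2 / (fF ν m μ v 0 ρ - u * q) ^ 2 + v * ρ) ρ := by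
  intro ρ hρ hσ
  set p : ℝ := max (ν : ℝ) ((ν : ℝ) / 2 + 1) + δ with hp
  have hp1 : 1 ≤ p := by
    have h1 : ((ν:ℝ)/2 + 1) ≤ max (ν : ℝ) ((ν : ℝ) / 2 + 1) := le_max_right _ _
    have h2 : (1:ℝ) ≤ ν := by exact_mod_cast hν
    rw [hp]; nlinarith
  have hpν : (ν:ℝ) < p := by
    have := le_max_left (ν : ℝ) ((ν : ℝ) / 2 + 1)
    rw [hp]; linarith
  have hlam2 := lam_decay hp1 hlam0 hdec
  have hlam_sq : ∀ k : Kspace ν, ‖lam k‖^2 ≤ 2 ^ p * c * (1 + ‖k‖) ^ (-p) := by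
    intro k
    have h1 : ‖lam k‖^2 ≤ ‖lam k‖ := by nlinarith [norm_nonneg (lam k), hlam1 k]
    exact h1.trans (hlam2 k)
  set s0 : ℝ := sigma0 μ v u q ρ / 2 with hs0def
  have hs0 : 0 < s0 := by rw [hs0def]; linarith
  set ε' : ℝ := sigma0 μ v u q ρ / (2 * v) with hε'def
  have hε'pos : 0 < ε' := by rw [hε'def]; positivity
  have hball : ∀ r ∈ Metric.ball ρ ε', s0 ≤ sigma0 μ v u q r := by
    intro r hr
    rw [Metric.mem_ball, Real.dist_eq] at hr
    have h1 := abs_lt.mp hr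
    have h2 : sigma0 μ v u q r = sigma0 μ v u q ρ + v * (r - ρ) := by unfold sigma0; ring
    rw [h2, hs0def]
    rw [hε'def] at h1
    have hvne : v ≠ 0 := ne_of_gt hv
    cases h1 with
    | intro hl hr' =>
      have h3 : v * (-(sigma0 μ v u q ρ / (2*v))) < v * (r - ρ) :=
        mul_lt_mul_of_pos_left hl hv
      have h4 : v * (-(sigma0 μ v u q ρ / (2*v))) = -(sigma0 μ v u q ρ / 2) := by
        field_simp
      linarith
  -- the dominating function for the derivative
  set Kb : ℝ := Real.exp (-β * s0) / (1 - Real.exp (-β * s0)) with hKb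
  have hKb0 : 0 ≤ Kb := by
    have : Real.exp (-β * s0) < 1 := by
      rw [show (1:ℝ) = Real.exp 0 from Real.exp_zero.symm]
      exact Real.exp_lt_exp.mpr (by nlinarith)
    rw [hKb]
    exact div_nonneg (Real.exp_pos _).le (by linarith)
  set Cq : ℝ := 1 + u^2*q^2/(2*s0^2) with hCq
  have hCq0 : 0 ≤ Cq := by rw [hCq]; positivity
  set C2π : ℝ := ((2 * π) ^ ν)⁻¹ with hC2π
  have hC2π0 : 0 ≤ C2π := by rw [hC2π]; positivity
  -- integrability of the dominating functions
  have hIg : Integrable (fun k : Kspace ν => Real.exp (-β * eps ν m k)) :=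
    integrable_exp_eps hm hβ
  have hIj : Integrable (fun k : Kspace ν => (1 + ‖k‖) ^ (-p)) := integrable_jap hpν
  have hbound_int : Integrable (fun k : Kspace ν =>
      C2π * (v * (Cq * Kb * Real.exp (-β * eps ν m k)
        + u^2*q^2*(2 ^ p * c * (1 + ‖k‖) ^ (-p)) / (4*s0^2)))) := by
    apply Integrable.const_mul
    apply Integrable.const_mul ((hIg.const_mul _).add ?_)
    have h := hIj.const_mul (u^2*q^2*(2 ^ p * c) / (4*s0^2))
    refine h.congr (Eventually.of_forall fun k => ?_)
    ring
  have hbound2_int : Integrable (fun k : Kspace ν =>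
      C2π * (β⁻¹ * Kb * Real.exp (-β * eps ν m k)
        + u^2*q^2*(2 ^ p * c * (1 + ‖k‖) ^ (-p)) / (4*s0))) := by
    apply Integrable.const_mul ((hIg.const_mul _).add ?_)
    have h := hIj.const_mul (u^2*q^2*(2 ^ p * c) / (4*s0))
    refine h.congr (Eventually.of_forall fun k => ?_)
    ring
  have hs0σ : s0 ≤ sigma0 μ v u q ρ := by rw [hs0def]; linarith
  -- apply differentiation under the integral sign
  have hmain := hasDerivAt_integral_of_dominated_loc_of_deriv_le
    (μ := (volume : Measure (Kspace ν)))
    (F := fun r k => C2π * p2Int ν m μ v u β lam q r k)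
    (F' := fun r k => C2π * (-v * ((Real.exp (β * eE ν m μ v u lam k q r) - 1)⁻¹ *
            (fF ν m μ v k r / eE ν m μ v u lam k q r)
          + (1 / 2) * (fF ν m μ v k r / eE ν m μ v u lam k q r - 1))))
    (bound := fun k => C2π * (v * (Cq * Kb * Real.exp (-β * eps ν m k)
        + u^2*q^2*(2 ^ p * c * (1 + ‖k‖) ^ (-p)) / (4*s0^2))))
    (Metric.ball_mem_nhds ρ hε'pos)
    (Eventually.of_forall fun r =>
      ((measurable_p2Int hmeas r).const_mul C2π).aestronglyMeasurable)
    ?_ -- integrability of F ρ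
    ((((measurable_F' hmeas ρ).const_mul (-v)).const_mul C2π).aestronglyMeasurable)
    ?_ -- bound
    hbound_int
    ?_ -- differentiability
  rotate_left
  · -- Integrable (F ρ)
    apply hbound2_int.mono' ((measurable_p2Int hmeas ρ).const_mul C2π).aestronglyMeasurable
    refine Eventually.of_forall fun k => ?_
    have hb := p2Int_bound hm hβ hq hs0 hs0σ k (hlam1 k)
    have h2 : u^2*q^2*‖lam k‖^2/(4*s0) ≤ u^2*q^2*(2 ^ p * c * (1 + ‖k‖) ^ (-p))/(4*s0) := by
      gcongr
      exact hlam_sq k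
    rw [Real.norm_eq_abs, abs_mul, abs_of_nonneg hC2π0]
    apply mul_le_mul_of_nonneg_left _ hC2π0
    calc |p2Int ν m μ v u β lam q ρ k|
        ≤ β⁻¹ * Kb * Real.exp (-β * eps ν m k) + u^2*q^2*‖lam k‖^2/(4*s0) := by
          simpa [hKb, mul_assoc] using hb
      _ ≤ _ := by linarith
  · -- bound on F'
    refine Eventually.of_forall fun k => fun r hr => ?_
    have hs := hball r hr
    obtain ⟨hg0, hg1⟩ := G_bound hm hβ hq hs0 hs k (hlam1 k)
    have h2 : u^2*q^2*‖lam k‖^2/(4*s0^2) ≤ u^2*q^2*(2 ^ p * c * (1 + ‖k‖) ^ (-p))/(4*s0^2) := by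
      gcongr
      exact hlam_sq k
    rw [Real.norm_eq_abs, abs_mul, abs_of_nonneg hC2π0, abs_mul, abs_neg,
      abs_of_nonneg hv.le, abs_of_nonneg hg0]
    apply mul_le_mul_of_nonneg_left _ hC2π0
    apply mul_le_mul_of_nonneg_left _ hv.le
    calc _ ≤ Cq * Kb * Real.exp (-β * eps ν m k) + u^2*q^2*‖lam k‖^2/(4*s0^2) := by
          simpa [hCq, hKb] using hg1
      _ ≤ _ := by linarith
  · -- differentiability
    refine Eventually.of_forall fun k => fun r hr => ?_
    exact (hasDerivAt_p2Int hm hβ hq (lt_of_lt_of_le hs0 (hball r hr)) k (hlam1 k)).const_mul C2π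
  obtain ⟨-, hInt⟩ := hmain
  -- the other pieces
  have hfd0 : HasDerivAt (fun r => fF ν m μ v 0 r - u * q) v ρ := by
    have h := (((hasDerivAt_id ρ).const_mul v).const_add
      (eps ν m (0 : Kspace ν) - μ)).sub_const (u * q)
    simpa [fF, mul_one] using h
  have hf0pos : 0 < fF ν m μ v 0 ρ - u * q := by
    have h1 : u * q ≤ |u| * q := mul_le_mul_of_nonneg_right (le_abs_self u) hq
    have h3 : eps ν m (0 : Kspace ν) = 0 := by unfold eps; simp
    unfold sigma0 at hσ
    unfold fF
    rw [h3]
    linarith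
  have heta : HasDerivAt (fun r => η^2 / (fF ν m μ v 0 r - u * q))
      ((0 * (fF ν m μ v 0 ρ - u*q) - η^2 * v) / (fF ν m μ v 0 ρ - u*q)^2) ρ :=
    (hasDerivAt_const ρ (η^2)).div hfd0 (ne_of_gt hf0pos)
  have hsq : HasDerivAt (fun r : ℝ => v / 2 * r^2) (v * ρ) ρ := by
    have h := (hasDerivAt_pow 2 ρ).const_mul (v/2)
    refine h.congr_deriv ?_
    push_cast
    ring
  have hcomb := ((hInt.sub_const (u / 2 * q ^ 2)).add hsq).add heta
  have hfun : (fun r : ℝ => p2eta ν m μ v u β lam q r η) =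
      fun r => (((∫ k : Kspace ν, C2π * p2Int ν m μ v u β lam q r k)
        - u / 2 * q ^ 2 + v / 2 * r ^ 2) + η ^ 2 / (fF ν m μ v 0 r - u * q)) := by
    funext r
    rw [p2eta, p2, hC2π]
  rw [hfun]
  refine hcomb.congr_deriv ?_
  have hswap : (∫ k : Kspace ν, C2π * (-v * ((Real.exp (β * eE ν m μ v u lam k q ρ) - 1)⁻¹ *
            (fF ν m μ v k ρ / eE ν m μ v u lam k q ρ)
          + (1 / 2) * (fF ν m μ v k ρ / eE ν m μ v u lam k q ρ - 1))))
      = -v * ∫ k : Kspace ν, C2π * ((Real.exp (β * eE ν m μ v u lam k q ρ) - 1)⁻¹ *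
            (fF ν m μ v k ρ / eE ν m μ v u lam k q ρ)
          + (1 / 2) * (fF ν m μ v k ρ / eE ν m μ v u lam k q ρ - 1)) := by
    rw [← integral_const_mul]
    congr 1
    funext k
    ring
  rw [hswap] at hcomb ⊢
  ring

end PB
end
end

section
/- Fix ρ ≥ 0 and η ≥ 0. On the open set {q ≥ 0 : σ(q,ρ) > 0}, the map q ↦ p²(q,ρ,η) is differentiable and its derivative equals u²q ∫_{ℝ^ν} (2π)^{−ν} |λ(k)|² { (e^{β E(k,q,ρ)} − 1)^{−1} + 1/2 } / E(k,q,ρ) dk + u η²/(f(0,ρ) − uq)² − uq. -/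
open MeasureTheory Real Filter Topology

noncomputable section

namespace PB

lemma p2Int_hasDerivAt (ν : ℕ) (m μ v u β : ℝ) (hβ : 0 < β) (lam : Kspace ν → ℂ)
    (ρ : ℝ) (k : Kspace ν) (x : ℝ)
    (hpos : 0 < fF ν m μ v k ρ ^ 2 - u ^ 2 * x ^ 2 * ‖lam k‖ ^ 2) :
    HasDerivAt (fun s : ℝ => p2Int ν m μ v u β lam s ρ k)
      (u ^ 2 * x * (‖lam k‖ ^ 2 *
        ((Real.exp (β * eE ν m μ v u lam k x ρ) - 1)⁻¹ + 1 / 2) /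
          eE ν m μ v u lam k x ρ)) x := by
  set f0 : ℝ := fF ν m μ v k ρ with hf0
  set l : ℝ := ‖lam k‖ ^ 2 with hl
  have hl0 : 0 ≤ l := by positivity
  set g : ℝ → ℝ := fun s => f0 ^ 2 - u ^ 2 * s ^ 2 * l with hgdef
  set E : ℝ := Real.sqrt (g x) with hE
  have hEpos : 0 < E := Real.sqrt_pos.2 hpos
  have hgne : g x ≠ 0 := ne_of_gt hpos
  have hg : HasDerivAt g (-(u ^ 2 * l * (2 * x))) x := by
    have h1 : HasDerivAt (fun s : ℝ => s ^ 2) (2 * x) x := by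
      simpa using hasDerivAt_pow 2 x
    have h2 := (h1.const_mul (u ^ 2 * l)).const_sub (f0 ^ 2)
    have hfun : g = fun s : ℝ => f0 ^ 2 - u ^ 2 * l * s ^ 2 := by
      funext s; simp only [hgdef]; ring
    rw [hfun]
    exact h2
  have hE' : HasDerivAt (fun s => Real.sqrt (g s)) (-(u ^ 2 * l * (2 * x)) / (2 * E)) x :=
    hg.sqrt hgne
  have hexplt : Real.exp (-β * E) < 1 := by
    rw [Real.exp_lt_one_iff]
    nlinarith
  have hne : 1 - Real.exp (-β * Real.sqrt (g x)) ≠ 0 := by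
    rw [← hE]; exact ne_of_gt (by linarith)
  set D : ℝ := -(u ^ 2 * l * (2 * x)) / (2 * E) with hD
  have h5 : HasDerivAt (fun s => -β⁻¹ * Real.log (1 - Real.exp (-β * Real.sqrt (g s))))
      (-β⁻¹ * (-(Real.exp (-β * Real.sqrt (g x)) * (-β * D)) / (1 - Real.exp (-β * Real.sqrt (g x))))) x := by
    exact ((((hE'.const_mul (-β)).exp).const_sub 1).log hne).const_mul (-β⁻¹)
  have h6 : HasDerivAt (fun s => (Real.sqrt (g s) - f0) / 2) (D / 2) x :=
    (hE'.sub_const f0).div_const 2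
  have h7 := h5.sub h6
  have hfun2 : (fun s : ℝ => p2Int ν m μ v u β lam s ρ k)
      = fun s => -β⁻¹ * Real.log (1 - Real.exp (-β * Real.sqrt (g s))) - (Real.sqrt (g s) - f0) / 2 := by
    funext s
    simp only [p2Int, eE, hgdef, ← hf0, ← hl]
  rw [hfun2]
  refine h7.congr_deriv ?_
  have hEeq : eE ν m μ v u lam k x ρ = E := rfl
  have hE2 : E ^ 2 = g x := Real.sq_sqrt hpos.le
  have hw : Real.exp (-β * Real.sqrt (g x)) = (Real.exp (β * E))⁻¹ := by
    rw [← hE, ← Real.exp_neg]; ring_nf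
  have hwpos : 0 < Real.exp (β * E) := Real.exp_pos _
  have hw1 : 1 < Real.exp (β * E) := by
    rw [show (1:ℝ) = Real.exp 0 by simp]
    exact Real.exp_lt_exp.2 (by nlinarith)
  have hwne : Real.exp (β * E) - 1 ≠ 0 := ne_of_gt (by linarith)
  rw [hEeq, hw, hD]
  field_simp
  ring

set_option maxHeartbeats 2000000 in
theorem statement7
    (ν : ℕ) (hν : 1 ≤ ν) (m β μ u v : ℝ) (hm : 0 < m) (hβ : 0 < β)
    (hv : 0 < v) (hvu : 0 < v - u)
    (lam : Kspace ν → ℂ) (hmeas : Measurable lam) (hlam0 : lam 0 = 1)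
    (hlam1 : ∀ k, ‖lam k‖ ≤ 1)
    (c δ : ℝ) (hδ : 0 < δ)
    (hdec : ∀ k : Kspace ν, ‖lam k‖ ≤ c / (1 + ‖k‖ ^ (max (ν : ℝ) ((ν : ℝ) / 2 + 1) + δ)))
    (ρ : ℝ) (hρ : 0 ≤ ρ) (η : ℝ) (hη : 0 ≤ η) :
    ∀ q : ℝ, 0 ≤ q → 0 < sigma0 μ v u q ρ →
      HasDerivAt (fun s : ℝ => p2eta ν m μ v u β lam s ρ η)
        (u ^ 2 * q * (∫ k : Kspace ν, ((2 * π) ^ ν)⁻¹ *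
            (‖lam k‖ ^ 2 *
              ((Real.exp (β * eE ν m μ v u lam k q ρ) - 1)⁻¹ + 1 / 2) /
                eE ν m μ v u lam k q ρ))
          + u * η ^ 2 / (fF ν m μ v 0 ρ - u * q) ^ 2 - u * q) q := by
  intro q hq hσ
  set S : ℝ := sigma0 μ v u q ρ with hSdef
  set s : ℝ := max (ν : ℝ) ((ν : ℝ) / 2 + 1) + δ with hsdef
  have hν1 : (1:ℝ) ≤ (ν:ℝ) := by exact_mod_cast hν
  have hs0 : 0 < s := by
    have := le_max_left (ν:ℝ) ((ν:ℝ)/2+1); simp only [hsdef]; linarith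
  have hsν : (ν:ℝ) < s := by
    have := le_max_left (ν:ℝ) ((ν:ℝ)/2+1); simp only [hsdef]; linarith
  -- c ≥ 1
  have hc1 : 1 ≤ c := by
    have h := hdec 0
    rw [hlam0] at h
    simp only [norm_one, norm_zero] at h
    rwa [Real.zero_rpow hs0.ne', add_zero, div_one] at h
  have hc0' : (0:ℝ) ≤ c := by linarith
  -- the dominating profile
  set Lb : Kspace ν → ℝ := fun k => c * (2:ℝ) ^ s * (1 + ‖k‖) ^ (-s) with hLbdef
  have hLb_nonneg : ∀ k, 0 ≤ Lb k := by
    intro k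
    have h1 : (0:ℝ) ≤ (2:ℝ) ^ s := Real.rpow_nonneg (by norm_num) _
    have h2 : (0:ℝ) ≤ (1 + ‖k‖) ^ (-s) := Real.rpow_nonneg (by positivity) _
    exact mul_nonneg (mul_nonneg hc0' h1) h2
  have hLb_int : Integrable Lb := by
    have hfr : ((Module.finrank ℝ (Kspace ν)) : ℝ) < s := by
      rw [finrank_euclideanSpace_fin]; exact hsν
    exact (integrable_one_add_norm hfr).const_mul (c * (2:ℝ) ^ s)
  have hLb : ∀ k, ‖lam k‖ ≤ Lb k := by
    intro k
    refine (hdec k).trans ?_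
    have ht : (0:ℝ) ≤ ‖k‖ := norm_nonneg k
    have hts : (0:ℝ) ≤ ‖k‖ ^ s := Real.rpow_nonneg ht _
    have hQ : (0:ℝ) < 1 + ‖k‖ ^ s := by linarith
    have hP : (0:ℝ) < (1 + ‖k‖) ^ s := Real.rpow_pos_of_pos (by linarith) _
    have hkey : (1 + ‖k‖) ^ s ≤ (2:ℝ) ^ s * (1 + ‖k‖ ^ s) := by
      rcases le_total ‖k‖ 1 with h | h
      · have h1 : (1 + ‖k‖) ^ s ≤ (2:ℝ) ^ s :=
          Real.rpow_le_rpow (by positivity) (by linarith) hs0.le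
        have h2 : (2:ℝ) ^ s ≤ (2:ℝ) ^ s * (1 + ‖k‖ ^ s) := by
          nlinarith [Real.rpow_nonneg (show (0:ℝ) ≤ 2 by norm_num) s]
        linarith
      · have h1 : (1 + ‖k‖) ^ s ≤ (2 * ‖k‖) ^ s :=
          Real.rpow_le_rpow (by positivity) (by linarith) hs0.le
        have h2 : (2 * ‖k‖) ^ s = (2:ℝ) ^ s * ‖k‖ ^ s :=
          Real.mul_rpow (by norm_num) ht
        have h3 : (2:ℝ) ^ s * ‖k‖ ^ s ≤ (2:ℝ) ^ s * (1 + ‖k‖ ^ s) := by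
          nlinarith [Real.rpow_nonneg (show (0:ℝ) ≤ 2 by norm_num) s]
        linarith
    have : c / (1 + ‖k‖ ^ s) ≤ c * (2:ℝ) ^ s / (1 + ‖k‖) ^ s := by
      rw [div_le_div_iff₀ hQ hP]
      calc c * (1 + ‖k‖) ^ s ≤ c * ((2:ℝ) ^ s * (1 + ‖k‖ ^ s)) :=
            mul_le_mul_of_nonneg_left hkey hc0'
        _ = c * (2:ℝ) ^ s * (1 + ‖k‖ ^ s) := by ring
    refine this.trans ?_
    show c * (2:ℝ) ^ s / (1 + ‖k‖) ^ s ≤ c * (2:ℝ) ^ s * (1 + ‖k‖) ^ (-s)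
    rw [Real.rpow_neg (by positivity : (0:ℝ) ≤ 1 + ‖k‖), div_eq_mul_inv]
  have hlam2 : ∀ k, ‖lam k‖ ^ 2 ≤ Lb k := by
    intro k
    have h1 : ‖lam k‖ ^ 2 ≤ ‖lam k‖ := by
      nlinarith [norm_nonneg (lam k), hlam1 k]
    exact h1.trans (hLb k)
  -- Gaussian integrability
  have hgauss : Integrable (fun k : Kspace ν => Real.exp (-β * eps ν m k)) := by
    have hb : (0:ℝ) < ((β / (2 * m) : ℝ) : ℂ).re := by
      simp only [Complex.ofReal_re]; positivity
    have h := (GaussianFourier.integrable_cexp_neg_mul_sq_norm_add (V := Kspace ν) hb 0 0).norm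
    refine h.congr (Eventually.of_forall fun k => ?_)
    simp only [zero_mul, add_zero]
    have harg : -((β / (2 * m) : ℝ) : ℂ) * (‖k‖:ℂ) ^ 2 = (((-β * eps ν m k : ℝ)) : ℂ) := by
      simp only [eps]
      push_cast
      have h2 : (2:ℂ) * (m:ℂ) ≠ 0 := by
        simp only [ne_eq, mul_eq_zero]
        push_neg
        exact ⟨by norm_num, by exact_mod_cast hm.ne'⟩
      field_simp
      try ring
    rw [harg, Complex.norm_exp_ofReal]
  -- basic facts about fF, eE at q
  have heps_nonneg : ∀ k : Kspace ν, 0 ≤ eps ν m k := by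
    intro k; simp only [eps]; positivity
  have hfeq : ∀ k : Kspace ν, fF ν m μ v k ρ = eps ν m k + S + |u| * q := by
    intro k; simp only [fF, hSdef, sigma0]; ring
  have huq : 0 ≤ |u| * q := mul_nonneg (abs_nonneg u) hq
  have hl2 : ∀ k, ‖lam k‖ ^ 2 ≤ 1 := by
    intro k; nlinarith [norm_nonneg (lam k), hlam1 k]
  have hl2n : ∀ k, (0:ℝ) ≤ ‖lam k‖ ^ 2 := fun k => by positivity
  have hE2q : ∀ k : Kspace ν, (eps ν m k + S) ^ 2 ≤
      fF ν m μ v k ρ ^ 2 - u ^ 2 * q ^ 2 * ‖lam k‖ ^ 2 := by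
    intro k
    have h := hfeq k
    have he := heps_nonneg k
    nlinarith [sq_abs u, hl2 k, hl2n k, sq_nonneg (u * q),
      mul_nonneg (add_nonneg he hσ.le) huq, sq_nonneg q, sq_nonneg u]
  have hEq_ge : ∀ k : Kspace ν, eps ν m k + S ≤ eE ν m μ v u lam k q ρ := by
    intro k
    rw [eE]
    exact Real.le_sqrt_of_sq_le (hE2q k)
  have hEq_posS : ∀ k : Kspace ν, S ≤ eE ν m μ v u lam k q ρ := by
    intro k; have := hEq_ge k; have := heps_nonneg k; linarith
  have hEq_pos : ∀ k : Kspace ν, 0 < eE ν m μ v u lam k q ρ := by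
    intro k; have := hEq_posS k; linarith
  have hfF_pos : ∀ k : Kspace ν, 0 < fF ν m μ v k ρ := by
    intro k; rw [hfeq k]; have := heps_nonneg k; linarith
  have hE_le_f : ∀ k : Kspace ν, eE ν m μ v u lam k q ρ ≤ fF ν m μ v k ρ := by
    intro k
    rw [eE]
    have h1 : fF ν m μ v k ρ ^ 2 - u ^ 2 * q ^ 2 * ‖lam k‖ ^ 2 ≤ fF ν m μ v k ρ ^ 2 := by
      have hb : 0 ≤ u ^ 2 * q ^ 2 * ‖lam k‖ ^ 2 := by positivity
      linarith
    calc Real.sqrt (fF ν m μ v k ρ ^ 2 - u ^ 2 * q ^ 2 * ‖lam k‖ ^ 2)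
        ≤ Real.sqrt (fF ν m μ v k ρ ^ 2) := Real.sqrt_le_sqrt h1
      _ = fF ν m μ v k ρ := Real.sqrt_sq (hfF_pos k).le
  -- the functions F and F'
  set F : ℝ → Kspace ν → ℝ := fun x k => ((2 * π) ^ ν)⁻¹ * p2Int ν m μ v u β lam x ρ k with hFdef
  set F' : ℝ → Kspace ν → ℝ := fun x k => u ^ 2 * x * (((2 * π) ^ ν)⁻¹ *
      (‖lam k‖ ^ 2 * ((Real.exp (β * eE ν m μ v u lam k x ρ) - 1)⁻¹ + 1 / 2) /
        eE ν m μ v u lam k x ρ)) with hF'def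
  have hπ : (0:ℝ) < 2 * π := by positivity
  have hc0pos : (0:ℝ) < ((2 * π) ^ ν)⁻¹ := by positivity
  have hc0le1 : ((2 * π) ^ ν)⁻¹ ≤ 1 := by
    have h : (1:ℝ) ≤ (2 * π) ^ ν := one_le_pow₀ (by nlinarith [Real.pi_gt_three])
    exact inv_le_one_of_one_le₀ h
  -- measurability
  have hfFm : Measurable (fun k : Kspace ν => fF ν m μ v k ρ) := by
    apply Measurable.add
    apply Measurable.sub
    · exact (measurable_norm.pow_const 2).div_const _
    · exact measurable_const
    · exact measurable_const
  have hEm : ∀ x : ℝ, Measurable (fun k : Kspace ν => eE ν m μ v u lam k x ρ) := by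
    intro x
    apply Measurable.sqrt
    exact (hfFm.pow_const 2).sub ((hmeas.norm.pow_const 2).const_mul (u ^ 2 * x ^ 2))
  have hFmeas : ∀ x : ℝ, AEStronglyMeasurable (F x) volume := by
    intro x
    apply Measurable.aestronglyMeasurable
    apply Measurable.const_mul
    apply Measurable.sub
    · apply Measurable.const_mul
      apply Measurable.log
      exact measurable_const.sub ((hEm x).const_mul (-β)).exp
    · exact (((hEm x).sub hfFm).div_const 2)
  have hF'meas : AEStronglyMeasurable (F' q) volume := by
    apply Measurable.aestronglyMeasurable
    apply Measurable.const_mul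
    apply Measurable.const_mul
    apply Measurable.div
    · exact (hmeas.norm.pow_const 2).mul
        (((((hEm q).const_mul β).exp.sub_const 1).inv).add_const (1/2))
    · exact hEm q
  -- integrability of F q
  have hFq_int : Integrable (F q) := by
    set C1 : ℝ := β⁻¹ * (Real.exp (-β * S) / (1 - Real.exp (-β * S))) with hC1
    set C2 : ℝ := u ^ 2 * q ^ 2 / (4 * S) with hC2
    have hC2n : 0 ≤ C2 := by rw [hC2]; positivity
    have hexpS : Real.exp (-β * S) < 1 := by
      rw [Real.exp_lt_one_iff]; nlinarith
    have hexpS0 : 0 < 1 - Real.exp (-β * S) := by linarith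
    have hbound_int : Integrable (fun k => C1 * Real.exp (-β * eps ν m k) + C2 * Lb k) :=
      (hgauss.const_mul C1).add (hLb_int.const_mul C2)
    refine hbound_int.mono' (hFmeas q) (Eventually.of_forall fun k => ?_)
    set E : ℝ := eE ν m μ v u lam k q ρ with hEk
    set f0 : ℝ := fF ν m μ v k ρ with hf0k
    have hE0 : 0 < E := hEq_pos k
    have hES : S ≤ E := hEq_posS k
    have hEe : eps ν m k + S ≤ E := hEq_ge k
    have hEf : E ≤ f0 := hE_le_f k
    have hfS : S ≤ f0 := le_trans hES hEf
    set t : ℝ := Real.exp (-β * E) with htk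
    have ht0 : 0 < t := Real.exp_pos _
    have htlt : t ≤ Real.exp (-β * S) := by
      apply Real.exp_le_exp.2; nlinarith
    have ht1 : t < 1 := lt_of_le_of_lt htlt hexpS
    have hlogle0 : Real.log (1 - t) ≤ 0 := Real.log_nonpos (by linarith) (by linarith)
    have hlog_le : -Real.log (1 - t) ≤ t / (1 - t) := by
      have hne : (0:ℝ) < 1 - t := by linarith
      have h1 : Real.log ((1 - t)⁻¹) ≤ (1 - t)⁻¹ - 1 :=
        Real.log_le_sub_one_of_pos (inv_pos.2 hne)
      rw [Real.log_inv] at h1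
      have h2 : (1 - t)⁻¹ - 1 = t / (1 - t) := by
        field_simp
        ring
      linarith [h1, h2.le]
    have hlog_le2 : t / (1 - t) ≤ Real.exp (-β * (eps ν m k + S)) / (1 - Real.exp (-β * S)) := by
      apply div_le_div₀ (by positivity)
      · rw [htk]; apply Real.exp_le_exp.2; nlinarith
      · exact hexpS0
      · linarith
    have hexp_split : β⁻¹ * (Real.exp (-β * (eps ν m k + S)) / (1 - Real.exp (-β * S))) =
        C1 * Real.exp (-β * eps ν m k) := by
      rw [hC1, show (-β * (eps ν m k + S)) = (-β * S) + (-β * eps ν m k) by ring,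
        Real.exp_add]
      ring
    have hT1 : |(-β⁻¹ * Real.log (1 - t))| ≤ C1 * Real.exp (-β * eps ν m k) := by
      rw [abs_mul, abs_neg, abs_of_pos (by positivity : (0:ℝ) < β⁻¹), abs_of_nonpos hlogle0]
      rw [← hexp_split]
      have hβinv : (0:ℝ) ≤ β⁻¹ := by positivity
      apply mul_le_mul_of_nonneg_left _ hβinv
      linarith
    -- bound for the (E - f)/2 term
    have hEf2 : E ^ 2 = f0 ^ 2 - u ^ 2 * q ^ 2 * ‖lam k‖ ^ 2 := by
      rw [hEk, eE, ← hf0k]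
      exact Real.sq_sqrt (by nlinarith [hE2q k, sq_nonneg (eps ν m k + S)])
    have hfE_le : f0 - E ≤ u ^ 2 * q ^ 2 * ‖lam k‖ ^ 2 / (2 * S) := by
      rw [le_div_iff₀ (by linarith)]
      nlinarith
    have hT2 : |(E - f0) / 2| ≤ C2 * Lb k := by
      rw [abs_div, abs_of_nonpos (by linarith : E - f0 ≤ 0), abs_two]
      have h3 : u ^ 2 * q ^ 2 * ‖lam k‖ ^ 2 / (2 * S) / 2 = C2 * ‖lam k‖ ^ 2 := by
        rw [hC2, div_div, show (2*S*2:ℝ) = 4*S by ring, div_mul_eq_mul_div]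
      have h4 : C2 * ‖lam k‖ ^ 2 ≤ C2 * Lb k :=
        mul_le_mul_of_nonneg_left (hlam2 k) hC2n
      have h5 : -(E - f0) / 2 ≤ u ^ 2 * q ^ 2 * ‖lam k‖ ^ 2 / (2 * S) / 2 := by
        have : -(E - f0) = f0 - E := by ring
        rw [this]
        linarith
      linarith [h3 ▸ h5]
    have hp2 : p2Int ν m μ v u β lam q ρ k = -β⁻¹ * Real.log (1 - t) - (E - f0) / 2 := by
      simp only [p2Int, ← hEk, ← hf0k, ← htk]
    calc ‖F q k‖ = ((2 * π) ^ ν)⁻¹ * |p2Int ν m μ v u β lam q ρ k| := by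
          rw [hFdef]
          simp only [Real.norm_eq_abs, abs_mul, abs_of_pos hc0pos]
      _ ≤ |p2Int ν m μ v u β lam q ρ k| :=
          mul_le_of_le_one_left (abs_nonneg _) hc0le1
      _ ≤ |(-β⁻¹ * Real.log (1 - t))| + |(E - f0) / 2| := by
          rw [hp2, sub_eq_add_neg]
          exact (abs_add_le _ _).trans (by rw [abs_neg])
      _ ≤ C1 * Real.exp (-β * eps ν m k) + C2 * Lb k := add_le_add hT1 hT2
  -- the ball radius
  set r : ℝ := S / (2 * (|u| + 1)) with hrdef
  have hr : 0 < r := by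
    rw [hrdef]; positivity
  have hur : |u| * r ≤ S / 2 := by
    rw [hrdef, ← mul_div_assoc]
    rw [div_le_div_iff₀ (by positivity) (by norm_num)]
    nlinarith [abs_nonneg u, hσ]
  -- lower bound for E on the ball
  have hball : ∀ x ∈ Metric.ball q r, ∀ k : Kspace ν,
      (S / 2) ^ 2 ≤ fF ν m μ v k ρ ^ 2 - u ^ 2 * x ^ 2 * ‖lam k‖ ^ 2 := by
    intro x hx k
    have hdist : |x - q| < r := by
      rw [Metric.mem_ball, Real.dist_eq] at hx; exact hx
    have hxabs : |x| < q + r := by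
      have h1 : |x| ≤ |x - q| + |q| := by
        calc |x| = |(x - q) + q| := by ring_nf
          _ ≤ |x - q| + |q| := abs_add_le _ _
      rw [abs_of_nonneg hq] at h1
      linarith
    have hux : |u| * |x| ≤ |u| * q + S / 2 := by
      have h1 : |u| * |x| ≤ |u| * (q + r) :=
        mul_le_mul_of_nonneg_left hxabs.le (abs_nonneg u)
      nlinarith [abs_nonneg u]
    have hsq : u ^ 2 * x ^ 2 * ‖lam k‖ ^ 2 ≤ (|u| * q + S / 2) ^ 2 := by
      have h1 : u ^ 2 * x ^ 2 = (|u| * |x|) ^ 2 := by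
        rw [mul_pow, sq_abs, sq_abs]
      have h2 : (|u| * |x|) ^ 2 ≤ (|u| * q + S / 2) ^ 2 := by
        apply sq_le_sq'
        · nlinarith [mul_nonneg (abs_nonneg u) (abs_nonneg x)]
        · exact hux
      nlinarith [hl2 k, hl2n k, sq_nonneg (|u| * |x|)]
    have hf := hfeq k
    have he := heps_nonneg k
    nlinarith [mul_nonneg (add_nonneg he hσ.le) huq, mul_nonneg he huq, mul_nonneg he hσ.le]
  have hEball : ∀ x ∈ Metric.ball q r, ∀ k : Kspace ν,
      S / 2 ≤ eE ν m μ v u lam k x ρ := by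
    intro x hx k
    rw [eE]
    exact Real.le_sqrt_of_sq_le (hball x hx k)
  -- the uniform bound for F'
  set CB : ℝ := u ^ 2 * (q + r) * ((2 / (β * S) + 1 / 2) / (S / 2)) with hCB
  have h_bound : ∀ᵐ k : Kspace ν, ∀ x ∈ Metric.ball q r, ‖F' x k‖ ≤ CB * Lb k := by
    refine Eventually.of_forall fun k => fun x hx => ?_
    set E : ℝ := eE ν m μ v u lam k x ρ with hEk
    have hE2 : S / 2 ≤ E := hEball x hx k
    have hE0 : 0 < E := by linarith
    have hβE : 0 < β * E := by positivity
    set W : ℝ := (Real.exp (β * E) - 1)⁻¹ with hW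
    have hexp1 : β * E + 1 ≤ Real.exp (β * E) := Real.add_one_le_exp _
    have hWpos : 0 < W := by
      rw [hW]; apply inv_pos.2; linarith
    have hWle : W ≤ 2 / (β * S) := by
      rw [hW]
      have h1 : (Real.exp (β * E) - 1)⁻¹ ≤ (β * E)⁻¹ := by
        apply inv_anti₀ hβE; linarith
      have h2 : (β * E)⁻¹ ≤ 2 / (β * S) := by
        have h21 : (β * E)⁻¹ ≤ (β * S / 2)⁻¹ := by
          apply inv_anti₀ (by positivity)
          nlinarith
        have h22 : (β * S / 2)⁻¹ = 2 / (β * S) := inv_div _ _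
        linarith
      linarith
    have hdist : |x - q| < r := by
      rw [Metric.mem_ball, Real.dist_eq] at hx; exact hx
    have hxabs : |x| ≤ q + r := by
      have h1 : |x| ≤ |x - q| + |q| := by
        calc |x| = |(x - q) + q| := by ring_nf
          _ ≤ |x - q| + |q| := abs_add_le _ _
      rw [abs_of_nonneg hq] at h1
      linarith
    set P : ℝ := ‖lam k‖ ^ 2 * (W + 1 / 2) / E with hP
    have hPn : 0 ≤ P := by
      rw [hP]; positivity
    have hPle : P ≤ Lb k * (2 / (β * S) + 1 / 2) / (S / 2) := by
      rw [hP]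
      apply div_le_div₀
      · apply mul_nonneg (hLb_nonneg k); positivity
      · apply mul_le_mul (hlam2 k) (by linarith) (by positivity) (hLb_nonneg k)
      · positivity
      · exact hE2
    calc ‖F' x k‖ = u ^ 2 * |x| * (((2 * π) ^ ν)⁻¹ * P) := by
          rw [hF'def]
          simp only [Real.norm_eq_abs, abs_mul]
          rw [abs_of_nonneg (sq_nonneg u), abs_of_pos hc0pos,
            abs_of_nonneg hPn]
      _ ≤ u ^ 2 * (q + r) * (1 * (Lb k * (2 / (β * S) + 1 / 2) / (S / 2))) := by
          apply mul_le_mul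
          · exact mul_le_mul_of_nonneg_left hxabs (sq_nonneg u)
          · apply mul_le_mul hc0le1 hPle hPn one_pos.le
          · positivity
          · positivity
      _ = CB * Lb k := by rw [hCB]; ring
  have hbound_int : Integrable (fun k => CB * Lb k) := hLb_int.const_mul CB
  -- differentiability on the ball
  have h_diff : ∀ᵐ k : Kspace ν, ∀ x ∈ Metric.ball q r, HasDerivAt (F · k) (F' x k) x := by
    refine Eventually.of_forall fun k => fun x hx => ?_
    have hpos : 0 < fF ν m μ v k ρ ^ 2 - u ^ 2 * x ^ 2 * ‖lam k‖ ^ 2 := by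
      have := hball x hx k
      nlinarith
    have h := (p2Int_hasDerivAt ν m μ v u β hβ lam ρ k x hpos).const_mul (((2 * π) ^ ν)⁻¹)
    have : F' x k = ((2 * π) ^ ν)⁻¹ * (u ^ 2 * x * (‖lam k‖ ^ 2 *
        ((Real.exp (β * eE ν m μ v u lam k x ρ) - 1)⁻¹ + 1 / 2) /
          eE ν m μ v u lam k x ρ)) := by
      rw [hF'def]; ring
    rw [this]
    exact h
  have hF_meas : ∀ᶠ x in 𝓝 q, AEStronglyMeasurable (F x) volume :=
    Eventually.of_forall hFmeas
  -- differentiation under the integral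
  have key := hasDerivAt_integral_of_dominated_loc_of_deriv_le (Metric.ball_mem_nhds q hr) hF_meas hFq_int hF'meas
    h_bound hbound_int h_diff
  have hmain : HasDerivAt (fun x => ∫ k : Kspace ν, F x k)
      (∫ k : Kspace ν, F' q k) q := key.2
  -- derivative of the polynomial part
  have hpoly : HasDerivAt (fun x : ℝ => u / 2 * x ^ 2) (u * q) q := by
    have h := (hasDerivAt_pow 2 q).const_mul (u / 2)
    refine h.congr_deriv ?_
    push_cast
    ring
  -- the eta part
  have hA0 : fF ν m μ v 0 ρ = v * ρ - μ := by
    simp [fF, eps]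
    ring
  have huq2 : u * q ≤ |u| * q := mul_le_mul_of_nonneg_right (le_abs_self u) hq
  have hApos : 0 < fF ν m μ v 0 ρ - u * q := by
    rw [hA0]
    have : S = v * ρ - μ - |u| * q := rfl
    linarith
  have hlin : HasDerivAt (fun x : ℝ => fF ν m μ v 0 ρ - u * x) (-u) q := by
    have h := ((hasDerivAt_id q).const_mul u).const_sub (fF ν m μ v 0 ρ)
    refine h.congr_deriv ?_
    ring
  have hinv := hlin.inv (ne_of_gt hApos)
  have hquad := hinv.const_mul (η ^ 2)
  -- assembling
  have H := ((hmain.sub hpoly).add_const (v / 2 * ρ ^ 2)).add hquad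
  have hfun : (fun s : ℝ => p2eta ν m μ v u β lam s ρ η) =
      fun x => ((∫ k : Kspace ν, F x k) - u / 2 * x ^ 2 + v / 2 * ρ ^ 2) +
        η ^ 2 * (fF ν m μ v 0 ρ - u * x)⁻¹ := by
    funext x
    simp only [p2eta, p2, hFdef, div_eq_mul_inv]
  rw [hfun]
  refine H.congr_deriv ?_
  have hint : (∫ k : Kspace ν, F' q k) = u ^ 2 * q * (∫ k : Kspace ν, ((2 * π) ^ ν)⁻¹ *
      (‖lam k‖ ^ 2 * ((Real.exp (β * eE ν m μ v u lam k q ρ) - 1)⁻¹ + 1 / 2) /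
        eE ν m μ v u lam k q ρ)) := by
    rw [hF'def]
    exact integral_const_mul _ _
  rw [hint]
  field_simp
  ring

end PB
end
end
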